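/- arXiv:2308.03071 — 4 statements merged into one kernel-verified Lean document; each statement's English description precedes it below -/
import Mathlib

section
/- Let d ≥ 2, let Λ ⊆ K̃^d be a lattice, and let v⁽¹⁾,…,v⁽ᵈ⁾ ∈ Λ be linearly independent vectors over K̃ with ‖v⁽ⁱ⁾‖ = λ_i(Λ) for each i = 1,…,d (a set of successive minima vectors). Then Λ is spanned over R by v⁽¹⁾,…,v⁽ᵈ⁾, i.e. Λ = R·v⁽¹⁾ + … + R·v⁽ᵈ⁾. -/
set_option linter.unusedSectionVars false
set_option maxHeartbeats 1000000

noncomputable section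

open scoped Classical

variable (Fq : Type) [Field Fq] [Fintype Fq]

/-- `K̃ = 𝔽_q((x⁻¹))`, realized as formal Laurent series in `t = x⁻¹`. -/
abbrev Kt := LaurentSeries Fq

/-- The element `x` of `K̃` (the inverse of the Laurent series variable). -/
def Kx : Kt Fq := HahnSeries.single (-1 : ℤ) 1

/-- Absolute value `|f| = q^{deg f}`, i.e. `q^{-order f}` in terms of `t = x⁻¹`. -/
def Kabs (f : Kt Fq) : ℝ := if f = 0 then 0 else (Fintype.card Fq : ℝ) ^ (-f.order)

/-- The ring embedding of `R = 𝔽_q[x]` into `K̃`. -/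
def polyK : Polynomial Fq →+* Kt Fq := (Polynomial.aeval (Kx Fq)).toRingHom

/-- Sup norm on `K̃^d`. -/
def vnorm {d : ℕ} (v : Fin d → Kt Fq) : ℝ := ⨆ i, Kabs Fq (v i)

/-- The lattice `g·R^d`. -/
def lattice {d : ℕ} (g : Matrix (Fin d) (Fin d) (Kt Fq)) : Set (Fin d → Kt Fq) :=
  {v | ∃ c : Fin d → Polynomial Fq, v = g.mulVec fun j => polyK Fq (c j)}

/-- `i`-th successive minimum of `Λ` with respect to a norm `nrm`: the least `r > 0` such that
`Λ` contains `i` linearly independent vectors of norm at most `r`. -/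
def minimaN {d : ℕ} (nrm : (Fin d → Kt Fq) → ℝ) (Λ : Set (Fin d → Kt Fq)) (i : ℕ) : ℝ :=
  sInf {r : ℝ | 0 < r ∧ ∃ v : Fin i → Fin d → Kt Fq,
    (∀ j, v j ∈ Λ) ∧ LinearIndependent (Kt Fq) v ∧ ∀ j, nrm (v j) ≤ r}

/-- `i`-th successive minimum with respect to the sup norm. -/
def minima {d : ℕ} (Λ : Set (Fin d → Kt Fq)) (i : ℕ) : ℝ := minimaN Fq (vnorm Fq) Λ i

/-- Covering radius of `Λ` with respect to the norm `nrm`. -/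
def covRad {d : ℕ} (nrm : (Fin d → Kt Fq) → ℝ) (Λ : Set (Fin d → Kt Fq)) : ℝ :=
  ⨆ w : Fin d → Kt Fq, ⨅ u : Λ, nrm (w - u.1)

/-- Length of the shortest nonzero vector of `Λ`. -/
def ell {d : ℕ} (Λ : Set (Fin d → Kt Fq)) : ℝ :=
  sInf {r : ℝ | ∃ v ∈ Λ, v ≠ 0 ∧ vnorm Fq v = r}

/-- `Λ` is well rounded: it contains `d` linearly independent vectors of norm `ℓ(Λ)`. -/
def IsWellRounded {d : ℕ} (Λ : Set (Fin d → Kt Fq)) : Prop :=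
  ∃ v : Fin d → Fin d → Kt Fq, (∀ j, v j ∈ Λ) ∧ LinearIndependent (Kt Fq) v ∧
    ∀ j, vnorm Fq (v j) = ell Fq Λ

/-- The multiplicative "norm" `N(v) = ∏ |v i|`. -/
def Nprod {d : ℕ} (v : Fin d → Kt Fq) : ℝ := ∏ i, Kabs Fq (v i)

/-- The Minkowski function `μ(Λ) = sup_w inf_{u ∈ Λ} N(w - u)`. -/
def mink {d : ℕ} (Λ : Set (Fin d → Kt Fq)) : ℝ :=
  ⨆ w : Fin d → Kt Fq, ⨅ u : Λ, Nprod Fq (w - u.1)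

/-! ### Auxiliary lemmas about `Kabs` -/

lemma one_lt_q : (1:ℝ) < (Fintype.card Fq : ℝ) := by exact_mod_cast Fintype.one_lt_card

lemma q_pos : (0:ℝ) < (Fintype.card Fq : ℝ) := lt_trans one_pos (one_lt_q Fq)

lemma Kabs_zero : Kabs Fq 0 = 0 := by simp [Kabs]

lemma Kabs_nonneg (f : Kt Fq) : 0 ≤ Kabs Fq f := by
  unfold Kabs; split
  · exact le_refl _
  · exact le_of_lt (zpow_pos (q_pos Fq) _)

lemma Kabs_pos {f : Kt Fq} (hf : f ≠ 0) : 0 < Kabs Fq f := by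
  unfold Kabs; rw [if_neg hf]; exact zpow_pos (q_pos Fq) _

lemma Kabs_eq_zpow {f : Kt Fq} (hf : f ≠ 0) :
    Kabs Fq f = (Fintype.card Fq : ℝ) ^ (-f.order) := if_neg hf

lemma Kabs_mul (a b : Kt Fq) : Kabs Fq (a * b) = Kabs Fq a * Kabs Fq b := by
  rcases eq_or_ne a 0 with rfl | ha
  · simp [Kabs_zero]
  rcases eq_or_ne b 0 with rfl | hb
  · simp [Kabs_zero]
  have hab : a * b ≠ 0 := mul_ne_zero ha hb
  rw [Kabs_eq_zpow Fq ha, Kabs_eq_zpow Fq hb, Kabs_eq_zpow Fq hab,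
    HahnSeries.order_mul ha hb, neg_add, zpow_add₀ (ne_of_gt (q_pos Fq))]

lemma Kabs_add_le (a b : Kt Fq) : Kabs Fq (a + b) ≤ max (Kabs Fq a) (Kabs Fq b) := by
  rcases eq_or_ne (a + b) 0 with hab | hab
  · rw [hab, Kabs_zero]
    exact le_max_of_le_left (Kabs_nonneg Fq a)
  rcases eq_or_ne a 0 with rfl | ha
  · rw [zero_add]; exact le_max_right _ _
  rcases eq_or_ne b 0 with rfl | hb
  · rw [add_zero]; exact le_max_left _ _
  have hmin : min a.order b.order ≤ (a + b).order :=
    HahnSeries.min_order_le_order_add hab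
  rw [Kabs_eq_zpow Fq ha, Kabs_eq_zpow Fq hb, Kabs_eq_zpow Fq hab]
  rcases le_total a.order b.order with h | h
  · refine le_max_of_le_left (zpow_le_zpow_right₀ (le_of_lt (one_lt_q Fq)) ?_)
    simp only [min_eq_left h] at hmin; omega
  · refine le_max_of_le_right (zpow_le_zpow_right₀ (le_of_lt (one_lt_q Fq)) ?_)
    simp only [min_eq_right h] at hmin; omega

lemma Kabs_sum_le {ι : Type*} (s : Finset ι) (f : ι → Kt Fq) {B : ℝ} (hB : 0 ≤ B)
    (h : ∀ i ∈ s, Kabs Fq (f i) ≤ B) : Kabs Fq (∑ i ∈ s, f i) ≤ B := by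
  classical
  induction s using Finset.induction_on with
  | empty => simpa [Kabs_zero] using hB
  | insert a s' hnotmem ih =>
    rw [Finset.sum_insert hnotmem]
    refine le_trans (Kabs_add_le Fq _ _) (max_le (h a (Finset.mem_insert_self a s')) ?_)
    exact ih fun i hi => h i (Finset.mem_insert_of_mem hi)

lemma Kabs_le_inv_q {f : Kt Fq} (h : ∀ m : ℤ, m ≤ 0 → f.coeff m = 0) :
    Kabs Fq f ≤ (Fintype.card Fq : ℝ)⁻¹ := by
  rcases eq_or_ne f 0 with rfl | hf
  · rw [Kabs_zero]; exact inv_nonneg.2 (le_of_lt (q_pos Fq))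
  have hord : 1 ≤ f.order := by
    by_contra hc
    exact (HahnSeries.coeff_order_eq_zero.not.2 hf) (h f.order (by omega))
  rw [Kabs_eq_zpow Fq hf, ← zpow_neg_one]
  exact zpow_le_zpow_right₀ (le_of_lt (one_lt_q Fq)) (by omega)

/-! ### Auxiliary lemmas about `vnorm` -/

lemma vnorm_def {d : ℕ} (v : Fin d → Kt Fq) : vnorm Fq v = ⨆ i, Kabs Fq (v i) := rfl

lemma Kabs_le_vnorm {d : ℕ} (v : Fin d → Kt Fq) (i : Fin d) : Kabs Fq (v i) ≤ vnorm Fq v := by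
  rw [vnorm_def]
  exact le_ciSup (f := fun j => Kabs Fq (v j)) (Set.Finite.bddAbove (Set.finite_range _)) i

lemma vnorm_le {d : ℕ} [Nonempty (Fin d)] {v : Fin d → Kt Fq} {B : ℝ}
    (h : ∀ i, Kabs Fq (v i) ≤ B) : vnorm Fq v ≤ B := by
  rw [vnorm_def]; exact ciSup_le h

lemma vnorm_eq_max {d : ℕ} [Nonempty (Fin d)] (v : Fin d → Kt Fq) :
    ∃ i₀, vnorm Fq v = Kabs Fq (v i₀) := by
  obtain ⟨i₀, -, hmax⟩ := Finset.exists_max_image Finset.univ (fun i => Kabs Fq (v i))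
    Finset.univ_nonempty
  exact ⟨i₀, le_antisymm (vnorm_le Fq fun i => hmax i (Finset.mem_univ i))
    (Kabs_le_vnorm Fq v i₀)⟩

lemma vnorm_pos {d : ℕ} [Nonempty (Fin d)] {v : Fin d → Kt Fq} (hv : v ≠ 0) :
    0 < vnorm Fq v := by
  obtain ⟨j, hj⟩ : ∃ j, v j ≠ 0 := by
    by_contra hc; push_neg at hc; exact hv (funext hc)
  exact lt_of_lt_of_le (Kabs_pos Fq hj) (Kabs_le_vnorm Fq v j)

lemma vnorm_exists_zpow {d : ℕ} [Nonempty (Fin d)] {v : Fin d → Kt Fq} (hv : v ≠ 0) :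
    ∃ e : ℤ, vnorm Fq v = (Fintype.card Fq : ℝ) ^ e := by
  obtain ⟨i₀, h₀⟩ := vnorm_eq_max Fq v
  have hne : v i₀ ≠ 0 := by
    intro h
    have := vnorm_pos Fq (v := v) hv
    rw [h₀, h, Kabs] at this; simp at this
  exact ⟨-(v i₀).order, by rw [h₀, Kabs_eq_zpow Fq hne]⟩

/-! ### Polynomial parts -/

lemma algebraMap_eq_single (a : Fq) :
    (algebraMap Fq (Kt Fq)) a = HahnSeries.single (0:ℤ) a := by
  have h : (algebraMap Fq (LaurentSeries Fq)) a
      = HahnSeries.ofPowerSeries ℤ Fq ((PowerSeries.C) a) := rfl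
  rw [h, HahnSeries.ofPowerSeries_C, HahnSeries.C_apply]

/-- `polyK` of `C a * X^n` is the single series `a·t^{-n}`. -/
lemma polyK_CXpow (a : Fq) (n : ℕ) :
    polyK Fq (Polynomial.C a * Polynomial.X ^ n) = HahnSeries.single (-(n:ℤ)) a := by
  have hx : (Kx Fq) ^ n = HahnSeries.single (-(n:ℤ)) (1 : Fq) := by
    rw [Kx, HahnSeries.single_pow]; norm_num
  simp only [polyK, AlgHom.toRingHom_eq_coe, RingHom.coe_coe, map_mul, map_pow,
    Polynomial.aeval_C, Polynomial.aeval_X, hx, algebraMap_eq_single,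
    HahnSeries.single_mul_single, zero_add, mul_one]

lemma exists_polyPart_aux : ∀ (N : ℕ) (f : Kt Fq),
    (∀ m : ℤ, m < -(N:ℤ) → f.coeff m = 0) →
    ∃ p : Polynomial Fq, ∀ m : ℤ, m ≤ 0 → (f - polyK Fq p).coeff m = 0 := by
  intro N
  induction N with
  | zero =>
    intro f hf
    refine ⟨Polynomial.C (f.coeff 0), fun m hm => ?_⟩
    have : polyK Fq (Polynomial.C (f.coeff 0)) = HahnSeries.single (0:ℤ) (f.coeff 0) := by
      simpa using polyK_CXpow Fq (f.coeff 0) 0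
    rw [HahnSeries.coeff_sub, this, HahnSeries.coeff_single]
    rcases eq_or_lt_of_le hm with rfl | hm'
    · simp
    · rw [hf m (by omega), if_neg (by omega)]; simp
  | succ N ih =>
    intro f hf
    set a := f.coeff (-(N+1 : ℕ) : ℤ) with ha
    set g := f - HahnSeries.single (-(N+1:ℕ) : ℤ) a with hg
    have hgc : ∀ m : ℤ, m < -(N:ℤ) → g.coeff m = 0 := by
      intro m hm
      rw [hg, HahnSeries.coeff_sub, HahnSeries.coeff_single]
      rcases eq_or_ne m (-(N+1:ℕ) : ℤ) with rfl | hne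
      · rw [if_pos rfl, ha]; simp
      · rw [if_neg hne, hf m (by push_cast at hne ⊢; omega)]; simp
    obtain ⟨p', hp'⟩ := ih g hgc
    refine ⟨Polynomial.C a * Polynomial.X ^ (N+1) + p', fun m hm => ?_⟩
    have : f - polyK Fq (Polynomial.C a * Polynomial.X ^ (N+1) + p') = g - polyK Fq p' := by
      rw [map_add, polyK_CXpow, hg]; push_cast; ring
    rw [this]; exact hp' m hm

lemma exists_polyPart (f : Kt Fq) :
    ∃ p : Polynomial Fq, ∀ m : ℤ, m ≤ 0 → (f - polyK Fq p).coeff m = 0 := by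
  rcases eq_or_ne f 0 with rfl | hf
  · exact exists_polyPart_aux Fq 0 0 (by simp)
  · exact exists_polyPart_aux Fq (-f.order).toNat f (fun m hm =>
      HahnSeries.coeff_eq_zero_of_lt_order (by omega))

/-! ### Closure properties of lattices -/

lemma lattice_sum_smul_mem {d : ℕ} (g : Matrix (Fin d) (Fin d) (Kt Fq))
    {v : Fin d → Fin d → Kt Fq} (hv : ∀ i, v i ∈ lattice Fq g)
    (c : Fin d → Polynomial Fq) : (∑ i, polyK Fq (c i) • v i) ∈ lattice Fq g := by
  choose b hb using hv
  refine ⟨fun j => ∑ i, c i * b i j, ?_⟩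
  have h1 : (fun j => polyK Fq (∑ i, c i * b i j))
      = ∑ i, polyK Fq (c i) • (fun j => polyK Fq (b i j)) := by
    funext j
    simp [map_sum, map_mul, Finset.sum_apply]
  have h2 : g.mulVec (fun j => polyK Fq (∑ i, c i * b i j))
      = ∑ i, polyK Fq (c i) • v i := by
    rw [← Matrix.mulVecLin_apply, h1, map_sum]
    refine Finset.sum_congr rfl fun i _ => ?_
    rw [map_smul, Matrix.mulVecLin_apply, ← hb i]
  exact h2.symm

lemma lattice_add_mem {d : ℕ} {g : Matrix (Fin d) (Fin d) (Kt Fq)}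
    {u w : Fin d → Kt Fq} (hu : u ∈ lattice Fq g) (hw : w ∈ lattice Fq g) :
    u + w ∈ lattice Fq g := by
  obtain ⟨cu, hcu⟩ := hu
  obtain ⟨cw, hcw⟩ := hw
  refine ⟨cu + cw, ?_⟩
  have h1 : (fun j => polyK Fq ((cu + cw) j))
      = (fun j => polyK Fq (cu j)) + (fun j => polyK Fq (cw j)) := by
    funext j; simp
  rw [hcu, hcw, h1]
  conv_rhs => rw [← Matrix.mulVecLin_apply, map_add]
  simp [Matrix.mulVecLin_apply]

/-! ### Successive minima -/

def minSet {d : ℕ} (Λ : Set (Fin d → Kt Fq)) (n : ℕ) : Set ℝ :=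
  {r : ℝ | 0 < r ∧ ∃ v : Fin n → Fin d → Kt Fq,
    (∀ j, v j ∈ Λ) ∧ LinearIndependent (Kt Fq) v ∧ ∀ j, vnorm Fq (v j) ≤ r}

lemma minima_eq {d : ℕ} (Λ : Set (Fin d → Kt Fq)) (n : ℕ) :
    minima Fq Λ n = sInf (minSet Fq Λ n) := rfl

lemma minSet_bddBelow {d : ℕ} (Λ : Set (Fin d → Kt Fq)) (n : ℕ) :
    BddBelow (minSet Fq Λ n) := ⟨0, fun r hr => le_of_lt hr.1⟩

lemma minSet_anti {d : ℕ} (Λ : Set (Fin d → Kt Fq)) {a b : ℕ} (hab : a ≤ b) :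
    minSet Fq Λ b ⊆ minSet Fq Λ a := by
  rintro r ⟨hr, u, hmem, hind, hle⟩
  exact ⟨hr, fun j => u (Fin.castLE hab j), fun j => hmem _,
    hind.comp _ (Fin.castLE_injective hab), fun j => hle _⟩

lemma minima_le {d : ℕ} {Λ : Set (Fin d → Kt Fq)} {n : ℕ} {r : ℝ}
    (hr : r ∈ minSet Fq Λ n) : minima Fq Λ n ≤ r :=
  csInf_le (minSet_bddBelow Fq Λ n) hr

lemma minima_mono {d : ℕ} {Λ : Set (Fin d → Kt Fq)} {a b : ℕ} (hab : a ≤ b)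
    (hne : (minSet Fq Λ b).Nonempty) : minima Fq Λ a ≤ minima Fq Λ b :=
  csInf_le_csInf (minSet_bddBelow Fq Λ a) hne (minSet_anti Fq Λ hab)

lemma fsmul_apply {d : ℕ} (a : Kt Fq) (f : Fin d → Kt Fq) (j : Fin d) :
    (a • f) j = a * f j := rfl

/-- Any set of successive-minima vectors of a lattice spans it over `R = 𝔽_q[x]`. -/
theorem successive_minima_vectors_span {d : ℕ} (hd : 2 ≤ d)
    (g : Matrix (Fin d) (Fin d) (Kt Fq)) (hg : g.det ≠ 0)
    (v : Fin d → Fin d → Kt Fq)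
    (hvmem : ∀ i, v i ∈ lattice Fq g)
    (hind : LinearIndependent (Kt Fq) v)
    (hmin : ∀ i : Fin d, vnorm Fq (v i) = minima Fq (lattice Fq g) ((i : ℕ) + 1)) :
    lattice Fq g = {w | ∃ c : Fin d → Polynomial Fq, w = ∑ i, polyK Fq (c i) • v i} := by
  have hdne : Nonempty (Fin d) := ⟨⟨0, by omega⟩⟩
  set q : ℝ := (Fintype.card Fq : ℝ) with hqdef
  set Λ := lattice Fq g with hΛ
  -- minSet is nonempty at all levels ≤ d
  have hSne : ∀ n, n ≤ d → (minSet Fq Λ n).Nonempty := by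
    intro n hn
    refine ⟨Finset.univ.sup' Finset.univ_nonempty (fun j => vnorm Fq (v j)),
      minSet_anti Fq Λ hn ⟨?_, v, hvmem, hind,
        fun j => Finset.le_sup' (fun j => vnorm Fq (v j)) (Finset.mem_univ j)⟩⟩
    exact lt_of_lt_of_le (vnorm_pos Fq (hind.ne_zero ⟨0, by omega⟩))
      (Finset.le_sup' (fun j => vnorm Fq (v j)) (Finset.mem_univ ⟨0, by omega⟩))
  ext w
  constructor
  swap
  · rintro ⟨c, rfl⟩
    exact lattice_sum_smul_mem Fq g hvmem c
  intro hw
  -- expand w in the basis v over K̃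
  have hcard : Fintype.card (Fin d) = Module.finrank (Kt Fq) (Fin d → Kt Fq) := by
    simp [Module.finrank_fin_fun]
  have hspan := hind.span_eq_top_of_card_eq_finrank hcard
  have hwmem : w ∈ Submodule.span (Kt Fq) (Set.range v) := hspan ▸ Submodule.mem_top
  obtain ⟨c0, hc0⟩ := (Submodule.mem_span_range_iff_exists_fun (Kt Fq)).1 hwmem
  have hc : ∑ i, c0 i • v i = w := hc0
  choose p hp using fun i => exists_polyPart Fq (c0 i)
  set ε : Fin d → Kt Fq := fun i => c0 i - polyK Fq (p i) with hε
  have hεdef : ∀ i, ε i = c0 i - polyK Fq (p i) := fun _ => rfl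
  have hεsmall : ∀ i, Kabs Fq (ε i) ≤ q⁻¹ := fun i => Kabs_le_inv_q Fq (hp i)
  set w' : Fin d → Kt Fq := ∑ i, ε i • v i with hw'
  have hw'co : ∀ j, w' j = ∑ i, ε i * v i j := by
    intro j
    rw [hw']
    simp only [Finset.sum_apply, fsmul_apply]
  have hwd : ∑ i, polyK Fq (p i) • v i + w' = w := by
    rw [hw', ← hc, ← Finset.sum_add_distrib]
    refine Finset.sum_congr rfl fun i _ => funext fun j => ?_
    show polyK Fq (p i) * v i j + ε i * v i j = c0 i * v i j
    rw [hεdef i]; ring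
  suffices hε0 : ∀ i, ε i = 0 by
    refine ⟨p, ?_⟩
    rw [← hwd, hw']
    have hz : ∀ i ∈ Finset.univ, ε i • v i = (0 : Fin d → Kt Fq) := fun i _ =>
      funext fun j => by show ε i * v i j = 0; rw [hε0 i, zero_mul]
    rw [Finset.sum_congr rfl hz, Finset.sum_const_zero, add_zero]
  by_contra hcon
  push_neg at hcon
  obtain ⟨i₀, hi₀⟩ := hcon
  -- the largest index with nonzero fractional coefficient
  set T : Finset (Fin d) := Finset.univ.filter (fun i => ε i ≠ 0) with hT
  have hTne : T.Nonempty := ⟨i₀, Finset.mem_filter.2 ⟨Finset.mem_univ _, hi₀⟩⟩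
  set k := T.max' hTne with hk
  have hεk : ε k ≠ 0 := by
    have := T.max'_mem hTne; simp only [hT, Finset.mem_filter] at this; exact this.2
  have hklarge : ∀ i, ε i ≠ 0 → i ≤ k := fun i hi =>
    T.le_max' i (Finset.mem_filter.2 ⟨Finset.mem_univ _, hi⟩)
  set L : ℝ := minima Fq Λ ((k:ℕ)+1) with hL
  have hLv : vnorm Fq (v k) = L := hmin k
  have hLpos : 0 < L := hLv ▸ vnorm_pos Fq (hind.ne_zero k)
  -- w' is in the lattice
  have hw'mem : w' ∈ Λ := by
    have h1 : w' = w + ∑ i, polyK Fq (-(p i)) • v i := by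
      have h2 : ∑ i, polyK Fq (-(p i)) • v i = -∑ i, polyK Fq (p i) • v i := by
        rw [← Finset.sum_neg_distrib]
        refine Finset.sum_congr rfl fun i _ => funext fun j => ?_
        show polyK Fq (-(p i)) * v i j = -(polyK Fq (p i) * v i j)
        rw [map_neg]; ring
      rw [h2, eq_sub_of_add_eq' hwd, sub_eq_add_neg]
    rw [h1]
    exact lattice_add_mem Fq hw (lattice_sum_smul_mem Fq g hvmem _)
  -- norm bound on w'
  have hrpos : 0 < q⁻¹ * L := mul_pos (inv_pos.2 (q_pos Fq)) hLpos
  have hw'le : vnorm Fq w' ≤ q⁻¹ * L := by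
    refine vnorm_le Fq fun j => ?_
    rw [hw'co j]
    refine Kabs_sum_le Fq _ _ (le_of_lt hrpos) fun i _ => ?_
    rcases eq_or_ne (ε i) 0 with h0 | h0
    · rw [h0, zero_mul, Kabs_zero]; exact le_of_lt hrpos
    · rw [Kabs_mul]
      refine mul_le_mul (hεsmall i) ?_ (Kabs_nonneg Fq _) (inv_nonneg.2 (le_of_lt (q_pos Fq)))
      calc Kabs Fq (v i j) ≤ vnorm Fq (v i) := Kabs_le_vnorm Fq (v i) j
        _ = minima Fq Λ ((i:ℕ)+1) := hmin i
        _ ≤ L := by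
            rw [hL]
            refine minima_mono Fq ?_ (hSne _ (by omega))
            have : i ≤ k := hklarge i h0
            omega
  -- the smallest index achieving the value L
  set M : Finset (Fin d) := Finset.univ.filter (fun i => minima Fq Λ ((i:ℕ)+1) = L) with hM
  have hMne : M.Nonempty := ⟨k, Finset.mem_filter.2 ⟨Finset.mem_univ _, hL.symm⟩⟩
  set m := M.min' hMne with hm
  have hmL : minima Fq Λ ((m:ℕ)+1) = L := by
    have := M.min'_mem hMne; simp only [hM, Finset.mem_filter] at this; exact this.2
  have hmk : m ≤ k := M.min'_le k (Finset.mem_filter.2 ⟨Finset.mem_univ _, hL.symm⟩)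
  -- previous minima are strictly smaller, hence at most q⁻¹ L
  have hgap : ∀ j : Fin d, (j:ℕ) < (m:ℕ) → minima Fq Λ ((j:ℕ)+1) ≤ q⁻¹ * L := by
    intro j hj
    have hjk : (j:ℕ) + 1 ≤ (k:ℕ) + 1 := by
      have : (m:ℕ) ≤ (k:ℕ) := hmk
      omega
    have hle : minima Fq Λ ((j:ℕ)+1) ≤ L := by
      rw [hL]; exact minima_mono Fq hjk (hSne _ (by omega))
    have hltL : minima Fq Λ ((j:ℕ)+1) < L := by
      rcases lt_or_eq_of_le hle with h | h
      · exact h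
      · exfalso
        have hjM : j ∈ M := Finset.mem_filter.2 ⟨Finset.mem_univ _, h⟩
        have h2 := M.min'_le j hjM
        rw [← hm] at h2
        have : (m:ℕ) ≤ (j:ℕ) := h2
        omega
    obtain ⟨e, he⟩ := vnorm_exists_zpow Fq (hind.ne_zero j)
    obtain ⟨ek, hek⟩ := vnorm_exists_zpow Fq (hind.ne_zero k)
    have hje : minima Fq Λ ((j:ℕ)+1) = q ^ e := by rw [← hmin j, he]
    have hLe : L = q ^ ek := by rw [← hLv, hek]
    have hlt2 : q ^ e < q ^ ek := by rw [← hje, ← hLe]; exact hltL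
    have heek : e < ek := by
      by_contra hcon2
      push_neg at hcon2
      exact absurd (zpow_le_zpow_right₀ (le_of_lt (one_lt_q Fq)) hcon2) (not_le.2 hlt2)
    have hstep : q ^ e ≤ q ^ (ek - 1) :=
      zpow_le_zpow_right₀ (le_of_lt (one_lt_q Fq)) (by omega)
    rw [hje, hLe]
    calc q ^ e ≤ q ^ (ek - 1) := hstep
      _ = q⁻¹ * q ^ ek := by
          rw [zpow_sub₀ (ne_of_gt (q_pos Fq)), zpow_one]
          ring
  -- build m+1 linearly independent short vectors: contradiction
  have hmd : (m:ℕ) ≤ d := le_of_lt m.isLt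
  set u : Fin ((m:ℕ)+1) → Fin d → Kt Fq :=
    Fin.snoc (fun j : Fin (m:ℕ) => v (Fin.castLE hmd j)) w' with hu
  have hulast : u (Fin.last (m:ℕ)) = w' := by
    simp only [hu]; exact Fin.snoc_last _ _
  have hucast : ∀ j : Fin (m:ℕ), u (Fin.castSucc j) = v (Fin.castLE hmd j) := by
    intro j; simp only [hu]; exact Fin.snoc_castSucc _ _ _
  have humem : ∀ j, u j ∈ Λ := by
    refine Fin.lastCases ?_ ?_
    · rw [hulast]; exact hw'mem
    · intro j; rw [hucast]; exact hvmem _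
  have huind : LinearIndependent (Kt Fq) u := by
    rw [Fintype.linearIndependent_iff]
    intro gc hsum0
    have hsum : ∑ i : Fin ((m:ℕ)+1), gc i • u i = 0 := hsum0
    have hsum' : ∑ j : Fin (m:ℕ), gc (Fin.castSucc j) • v (Fin.castLE hmd j)
        + gc (Fin.last (m:ℕ)) • w' = 0 := by
      calc ∑ j : Fin (m:ℕ), gc (Fin.castSucc j) • v (Fin.castLE hmd j)
            + gc (Fin.last (m:ℕ)) • w'
          = ∑ i : Fin ((m:ℕ)+1), gc i • u i := by
            rw [Fin.sum_univ_castSucc, hulast]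
            congr 1
            exact Finset.sum_congr rfl fun j _ => by rw [hucast j]
        _ = 0 := hsum
    set b : Fin d → Kt Fq := fun i =>
      (if h : (i:ℕ) < (m:ℕ) then gc (Fin.castSucc ⟨(i:ℕ), h⟩) else 0)
        + gc (Fin.last (m:ℕ)) * ε i with hb
    have hbdef : ∀ i, b i =
        (if h : (i:ℕ) < (m:ℕ) then gc (Fin.castSucc ⟨(i:ℕ), h⟩) else 0)
          + gc (Fin.last (m:ℕ)) * ε i := fun _ => rfl
    have hfirst :
        (∑ i : Fin d, (if h : (i:ℕ) < (m:ℕ) then gc (Fin.castSucc ⟨(i:ℕ), h⟩) else 0) • v i)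
        = ∑ j : Fin (m:ℕ), gc (Fin.castSucc j) • v (Fin.castLE hmd j) := by
      classical
      have hvanish : ∀ i ∈ Finset.univ, i ∉ (Finset.univ : Finset (Fin (m:ℕ))).map
          ⟨Fin.castLE hmd, Fin.castLE_injective hmd⟩ →
          (if h : (i:ℕ) < (m:ℕ) then gc (Fin.castSucc ⟨(i:ℕ), h⟩) else 0) • v i = 0 := by
        intro i _ hnot
        have hni : ¬ ((i:ℕ) < (m:ℕ)) := by
          intro hlt
          refine hnot (Finset.mem_map.2 ⟨⟨(i:ℕ), hlt⟩, Finset.mem_univ _, ?_⟩)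
          ext; simp
        rw [dif_neg hni]
        exact funext fun j => zero_mul (v i j)
      calc (∑ i : Fin d, (if h : (i:ℕ) < (m:ℕ) then gc (Fin.castSucc ⟨(i:ℕ), h⟩) else 0) • v i)
          = ∑ i ∈ (Finset.univ : Finset (Fin (m:ℕ))).map
              ⟨Fin.castLE hmd, Fin.castLE_injective hmd⟩,
              (if h : (i:ℕ) < (m:ℕ) then gc (Fin.castSucc ⟨(i:ℕ), h⟩) else 0) • v i :=
            (Finset.sum_subset (Finset.subset_univ _) hvanish).symm
        _ = ∑ j : Fin (m:ℕ),
              (if h : ((Fin.castLE hmd j : Fin d):ℕ) < (m:ℕ)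
                then gc (Fin.castSucc ⟨((Fin.castLE hmd j : Fin d):ℕ), h⟩) else 0)
                • v (Fin.castLE hmd j) := Finset.sum_map _ _ _
        _ = ∑ j : Fin (m:ℕ), gc (Fin.castSucc j) • v (Fin.castLE hmd j) := by
            refine Finset.sum_congr rfl fun j _ => ?_
            have hj : ((Fin.castLE hmd j : Fin d):ℕ) < (m:ℕ) := by simp [j.isLt]
            have hjj : (⟨((Fin.castLE hmd j : Fin d):ℕ), hj⟩ : Fin (m:ℕ)) = j := by
              ext; simp
            rw [dif_pos hj, hjj]
    have hsecond : ∑ i : Fin d, (gc (Fin.last (m:ℕ)) * ε i) • v i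
        = gc (Fin.last (m:ℕ)) • w' := by
      funext j
      simp only [Finset.sum_apply, fsmul_apply]
      rw [hw'co j, Finset.mul_sum]
      exact Finset.sum_congr rfl fun i _ => by ring
    have hrew : ∑ i, b i • v i = 0 := by
      calc ∑ i, b i • v i
          = ∑ i : Fin d,
              ((if h : (i:ℕ) < (m:ℕ) then gc (Fin.castSucc ⟨(i:ℕ), h⟩) else 0) • v i
                + (gc (Fin.last (m:ℕ)) * ε i) • v i) := by
            refine Finset.sum_congr rfl fun i _ => funext fun j => ?_
            show b i * v i j
              = (if h : (i:ℕ) < (m:ℕ) then gc (Fin.castSucc ⟨(i:ℕ), h⟩) else 0) * v i j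
                + (gc (Fin.last (m:ℕ)) * ε i) * v i j
            rw [hbdef i]; ring
        _ = (∑ i : Fin d, (if h : (i:ℕ) < (m:ℕ) then gc (Fin.castSucc ⟨(i:ℕ), h⟩) else 0) • v i)
            + ∑ i : Fin d, (gc (Fin.last (m:ℕ)) * ε i) • v i := Finset.sum_add_distrib
        _ = ∑ j : Fin (m:ℕ), gc (Fin.castSucc j) • v (Fin.castLE hmd j)
            + gc (Fin.last (m:ℕ)) • w' := by rw [hfirst, hsecond]
        _ = 0 := hsum'
    have hb0 : ∀ i, b i = 0 := Fintype.linearIndependent_iff.1 hind b hrew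
    have hlast : gc (Fin.last (m:ℕ)) = 0 := by
      have hbk := hb0 k
      rw [hbdef k] at hbk
      have hnk : ¬ ((k:ℕ) < (m:ℕ)) := by
        have : (m:ℕ) ≤ (k:ℕ) := hmk
        omega
      rw [dif_neg hnk, zero_add] at hbk
      exact (mul_eq_zero.1 hbk).resolve_right hεk
    intro j
    refine Fin.lastCases hlast ?_ j
    intro j'
    have hbj := hb0 (Fin.castLE hmd j')
    rw [hbdef _] at hbj
    have hj' : ((Fin.castLE hmd j' : Fin d):ℕ) < (m:ℕ) := by simp [j'.isLt]
    have hjj : (⟨((Fin.castLE hmd j' : Fin d):ℕ), hj'⟩ : Fin (m:ℕ)) = j' := by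
      ext; simp
    rw [dif_pos hj', hjj, hlast, zero_mul, add_zero] at hbj
    exact hbj
  have hunorm : ∀ j, vnorm Fq (u j) ≤ q⁻¹ * L := by
    refine Fin.lastCases ?_ ?_
    · rw [hulast]; exact hw'le
    · intro j
      rw [hucast, hmin (Fin.castLE hmd j)]
      exact hgap _ (by simp [j.isLt])
  have hcontra : minima Fq Λ ((m:ℕ)+1) ≤ q⁻¹ * L :=
    minima_le Fq ⟨hrpos, u, humem, huind, hunorm⟩
  rw [hmL] at hcontra
  have hfin : q⁻¹ * L < 1 * L :=
    mul_lt_mul_of_pos_right (inv_lt_one_of_one_lt₀ (one_lt_q Fq)) hLpos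
  rw [one_mul] at hfin
  linarith
end
end

section
/- Let d ≥ 2 and let Λ ⊆ K̃^d be a well rounded unimodular lattice. Then μ(Λ) ≤ q^{-d}, where μ(Λ) = sup_{w ∈ K̃^d} inf_{u ∈ Λ} ∏_{i=1}^d |w_i − u_i|. -/
noncomputable section

open scoped Classical

variable (Fq : Type) [Field Fq] [Fintype Fq]

namespace MinkAux

open HahnSeries Finset

abbrev qr : ℝ := (Fintype.card Fq : ℝ)

lemma one_lt_qr : (1:ℝ) < qr Fq := by
  exact_mod_cast Fintype.one_lt_card

lemma qr_pos : (0:ℝ) < qr Fq := lt_trans one_pos (one_lt_qr Fq)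

/-- all coefficients below `a` vanish -/
def SuppGe (f : Kt Fq) (a : ℤ) : Prop := ∀ n : ℤ, n < a → f.coeff n = 0

variable {Fq}

lemma suppGe_mono {f : Kt Fq} {a b : ℤ} (hab : a ≤ b) (h : SuppGe Fq f b) : SuppGe Fq f a :=
  fun n hn => h n (lt_of_lt_of_le hn hab)

lemma suppGe_coeff_sum {ι : Type*} (s : Finset ι) (f : ι → Kt Fq) (n : ℤ) :
    (∑ i ∈ s, f i).coeff n = ∑ i ∈ s, (f i).coeff n := by
  induction s using Finset.induction_on with
  | empty => simp
  | insert _ _ hx ih => rw [Finset.sum_insert hx, Finset.sum_insert hx, HahnSeries.coeff_add, ih]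

lemma suppGe_sum {ι : Type*} {s : Finset ι} {f : ι → Kt Fq} {a : ℤ}
    (h : ∀ i ∈ s, SuppGe Fq (f i) a) : SuppGe Fq (∑ i ∈ s, f i) a := by
  intro n hn
  rw [suppGe_coeff_sum]
  exact Finset.sum_eq_zero fun i hi => h i hi n hn

lemma suppGe_mul {f g : Kt Fq} {a b : ℤ} (hf : SuppGe Fq f a) (hg : SuppGe Fq g b) :
    SuppGe Fq (f * g) (a + b) := by
  intro n hn
  by_contra h
  have hn' : n ∈ (f * g).support := h
  obtain ⟨i, hi, j, hj, rfl⟩ := HahnSeries.support_mul_subset hn'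
  have hia : a ≤ i := le_of_not_gt fun hlt => hi (hf i hlt)
  have hjb : b ≤ j := le_of_not_gt fun hlt => hj (hg j hlt)
  exact absurd hn (not_lt.mpr (add_le_add hia hjb))

lemma suppGe_prod {ι : Type*} (s : Finset ι) (f : ι → Kt Fq) (a : ι → ℤ)
    (h : ∀ i ∈ s, SuppGe Fq (f i) (a i)) :
    SuppGe Fq (∏ i ∈ s, f i) (∑ i ∈ s, a i) := by
  induction s using Finset.induction_on with
  | empty =>
      intro n hn
      simp only [Finset.prod_empty, Finset.sum_empty] at *
      rw [HahnSeries.coeff_one, if_neg (by omega)]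
  | insert _ _ hx ih =>
      rw [Finset.prod_insert hx, Finset.sum_insert hx]
      exact suppGe_mul (h _ (Finset.mem_insert_self _ _))
        (ih fun i hi => h i (Finset.mem_insert_of_mem hi))

lemma coeff_mul_bot {f g : Kt Fq} {a b : ℤ} (hf : SuppGe Fq f a) (hg : SuppGe Fq g b) :
    (f * g).coeff (a + b) = f.coeff a * g.coeff b := by
  have hdecomp : f = HahnSeries.single a (f.coeff a) + (f - HahnSeries.single a (f.coeff a)) := by
    ring
  have hf' : SuppGe Fq (f - HahnSeries.single a (f.coeff a)) (a + 1) := by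
    intro n hn
    rw [HahnSeries.coeff_sub]
    rcases lt_or_eq_of_le (Int.lt_add_one_iff.mp hn) with h | h
    · rw [hf n h, HahnSeries.coeff_single, if_neg (by omega), sub_zero]
    · subst h; rw [HahnSeries.coeff_single_same, sub_self]
  calc (f * g).coeff (a + b)
      = ((HahnSeries.single a (f.coeff a)) * g).coeff (a + b)
        + ((f - HahnSeries.single a (f.coeff a)) * g).coeff (a + b) := by
        rw [← HahnSeries.coeff_add, ← add_mul, ← hdecomp]
    _ = f.coeff a * g.coeff b := by
        rw [add_comm a b, HahnSeries.coeff_single_mul_add,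
          suppGe_mul hf' hg (b + a) (by omega), add_zero]

lemma coeff_prod_bot {ι : Type*} (s : Finset ι) (f : ι → Kt Fq) (a : ι → ℤ)
    (h : ∀ i ∈ s, SuppGe Fq (f i) (a i)) :
    (∏ i ∈ s, f i).coeff (∑ i ∈ s, a i) = ∏ i ∈ s, (f i).coeff (a i) := by
  induction s using Finset.induction_on with
  | empty => simp [HahnSeries.coeff_one]
  | insert _ _ hx ih =>
      rw [Finset.prod_insert hx, Finset.sum_insert hx, Finset.prod_insert hx,
        coeff_mul_bot (h _ (Finset.mem_insert_self _ _))
          (suppGe_prod _ _ _ fun i hi => h i (Finset.mem_insert_of_mem hi)),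
        ih fun i hi => h i (Finset.mem_insert_of_mem hi)]

lemma Kabs_nonneg (f : Kt Fq) : 0 ≤ Kabs Fq f := by
  unfold Kabs
  split_ifs
  · exact le_refl 0
  · positivity

lemma Kabs_le_zpow_iff {f : Kt Fq} {m : ℤ} :
    Kabs Fq f ≤ qr Fq ^ m ↔ SuppGe Fq f (-m) := by
  unfold Kabs
  split_ifs with h
  · subst h
    simp only [zpow_nonneg (le_of_lt (qr_pos Fq)), true_iff]
    intro n _; exact HahnSeries.coeff_zero
  · rw [zpow_le_zpow_iff_right₀ (one_lt_qr Fq)]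
    constructor
    · intro hm n hn
      exact HahnSeries.coeff_eq_zero_of_lt_order (by omega)
    · intro hs
      by_contra hc
      exact (mt HahnSeries.coeff_order_eq_zero.mp h) (hs _ (by omega))

lemma Kabs_mul (f g : Kt Fq) : Kabs Fq (f * g) = Kabs Fq f * Kabs Fq g := by
  unfold Kabs
  by_cases hf : f = 0
  · simp [hf]
  by_cases hg : g = 0
  · simp [hg]
  rw [if_neg hf, if_neg hg, if_neg (mul_ne_zero hf hg), HahnSeries.order_mul hf hg, neg_add,
    zpow_add₀ (ne_of_gt (qr_pos Fq))]

lemma Kabs_single {a : ℤ} {c : Fq} (hc : c ≠ 0) :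
    Kabs Fq (HahnSeries.single a c) = qr Fq ^ (-a) := by
  unfold Kabs
  rw [if_neg (HahnSeries.single_ne_zero hc), HahnSeries.order_single hc]

lemma Kabs_ge_of_coeff_ne {f : Kt Fq} {n : ℤ} (h : f.coeff n ≠ 0) :
    qr Fq ^ (-n) ≤ Kabs Fq f := by
  have hf : f ≠ 0 := fun h0 => h (by rw [h0]; exact HahnSeries.coeff_zero)
  unfold Kabs
  rw [if_neg hf]
  exact zpow_le_zpow_right₀ (le_of_lt (one_lt_qr Fq))
    (by simpa using neg_le_neg (HahnSeries.order_le_of_coeff_ne_zero h))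


lemma Kx_pow (k : ℕ) : (Kx Fq) ^ k = HahnSeries.single (-(k : ℤ)) (1 : Fq) := by
  induction k with
  | zero => simp [HahnSeries.single_zero_one]
  | succ n ih =>
      rw [pow_succ, ih]
      show _ * HahnSeries.single (-1 : ℤ) 1 = _
      rw [HahnSeries.single_mul_single, mul_one]
      congr 1
      push_cast; ring

lemma polyK_C_mul_X_pow (c : Fq) (k : ℕ) :
    polyK Fq (Polynomial.C c * Polynomial.X ^ k) = HahnSeries.single (-(k : ℤ)) c := by
  unfold polyK
  simp only [AlgHom.toRingHom_eq_coe, RingHom.coe_coe, map_mul, map_pow, Polynomial.aeval_C,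
    Polynomial.aeval_X]
  rw [Kx_pow, HahnSeries.algebraMap_apply', PowerSeries.algebraMap_apply,
    HahnSeries.ofPowerSeries_C, HahnSeries.C_apply,
    show (algebraMap Fq Fq) c = c from rfl, HahnSeries.single_mul_single, zero_add, mul_one]

lemma exists_polyPart (a : Kt Fq) :
    ∃ p : Polynomial Fq, SuppGe Fq (a - polyK Fq p) 1 := by
  set N : ℕ := (-a.order).toNat with hN
  have horder : -(N : ℤ) ≤ a.order ∨ a = 0 := by
    by_cases h : a = 0
    · right; exact h
    · left; omega
  refine ⟨∑ k ∈ Finset.range (N + 1), Polynomial.C (a.coeff (-(k : ℤ))) * Polynomial.X ^ k, ?_⟩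
  intro n hn
  have hn0 : n ≤ 0 := by omega
  rw [HahnSeries.coeff_sub, map_sum, suppGe_coeff_sum]
  have hco : ∀ k ∈ Finset.range (N + 1),
      (polyK Fq (Polynomial.C (a.coeff (-(k : ℤ))) * Polynomial.X ^ k)).coeff n
      = if k = (-n).toNat then a.coeff (-(k : ℤ)) else 0 := by
    intro k _
    rw [polyK_C_mul_X_pow, HahnSeries.coeff_single]
    congr 1
    simp only [eq_iff_iff]
    omega
  rw [Finset.sum_congr rfl hco, Finset.sum_ite_eq' (Finset.range (N + 1))]
  split_ifs with h
  · rw [show (-(((-n).toNat : ℕ)) : ℤ) = n by omega, sub_self]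
  · have hk : (N : ℤ) < -n := by
      simp only [Finset.mem_range] at h
      omega
    rcases horder with ho | ho
    · rw [HahnSeries.coeff_eq_zero_of_lt_order (by omega), sub_zero]
    · simp [ho]

variable {d : ℕ} {g : Matrix (Fin d) (Fin d) (Kt Fq)}

lemma zero_mem_lattice : (0 : Fin d → Kt Fq) ∈ lattice Fq g := by
  refine ⟨0, ?_⟩
  have : (fun j : Fin d => polyK Fq ((0 : Fin d → Polynomial Fq) j)) = (0 : Fin d → Kt Fq) := by
    funext j; simp
  rw [this, Matrix.mulVec_zero]

lemma mem_lattice_add {u w : Fin d → Kt Fq} (hu : u ∈ lattice Fq g) (hw : w ∈ lattice Fq g) :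
    u + w ∈ lattice Fq g := by
  obtain ⟨c, rfl⟩ := hu
  obtain ⟨c', rfl⟩ := hw
  refine ⟨c + c', ?_⟩
  have : (fun j => polyK Fq ((c + c') j)) = (fun j => polyK Fq (c j)) + fun j => polyK Fq (c' j) := by
    funext j; simp [map_add]
  rw [this, Matrix.mulVec_add]

lemma mem_lattice_smul {u : Fin d → Kt Fq} (p : Polynomial Fq) (hu : u ∈ lattice Fq g) :
    (fun i => polyK Fq p * u i) ∈ lattice Fq g := by
  obtain ⟨c, rfl⟩ := hu
  refine ⟨fun j => p * c j, ?_⟩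
  funext i
  simp only [Matrix.mulVec, dotProduct, map_mul]
  rw [Finset.mul_sum]
  exact Finset.sum_congr rfl fun j _ => by ring

lemma lattice_sum {ι : Type*} (s : Finset ι) (p : ι → Polynomial Fq) (vv : ι → Fin d → Kt Fq)
    (h : ∀ l ∈ s, vv l ∈ lattice Fq g) :
    (fun i => ∑ l ∈ s, polyK Fq (p l) * vv l i) ∈ lattice Fq g := by
  induction s using Finset.induction_on with
  | empty => simp only [Finset.sum_empty]; exact zero_mem_lattice
  | @insert x s hx ih =>
      have : (fun i => ∑ l ∈ insert x s, polyK Fq (p l) * vv l i)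
          = (fun i => polyK Fq (p x) * vv x i) + fun i => ∑ l ∈ s, polyK Fq (p l) * vv l i := by
        funext i
        simp [Finset.sum_insert hx]
      rw [this]
      exact mem_lattice_add (mem_lattice_smul _ (h x (Finset.mem_insert_self _ _)))
        (ih fun l hl => h l (Finset.mem_insert_of_mem hl))


lemma C_mul_coeff (a : Fq) (x : Kt Fq) (n : ℤ) :
    (HahnSeries.single (0 : ℤ) a * x).coeff n = a * x.coeff n := by
  have := HahnSeries.coeff_single_mul_add (r := a) (x := x) (a := n) (b := (0 : ℤ))
  simpa using this

lemma intCast_mul_coeff (k : ℤ) (x : Kt Fq) (n : ℤ) :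
    (((k : ℤ) : Kt Fq) * x).coeff n = ((k : ℤ) : Fq) * x.coeff n := by
  have h : ((k : ℤ) : Kt Fq) = HahnSeries.single (0 : ℤ) ((k : ℤ) : Fq) := by
    rw [← map_intCast (HahnSeries.C : Fq →+* Kt Fq) k, HahnSeries.C_apply]
  rw [h, C_mul_coeff]

lemma det_coeff_bot (B : Matrix (Fin d) (Fin d) (Kt Fq)) (m : Fin d → ℤ)
    (hB : ∀ i j, SuppGe Fq (B i j) (-(m j))) :
    B.det.coeff (-(∑ j, m j)) = (Matrix.of fun i j => (B i j).coeff (-(m j))).det := by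
  rw [Matrix.det_apply', Matrix.det_apply', suppGe_coeff_sum]
  refine Finset.sum_congr rfl fun σ _ => ?_
  rw [intCast_mul_coeff]
  congr 1
  rw [show -(∑ j, m j) = ∑ i, -(m i) by rw [← Finset.sum_neg_distrib],
    coeff_prod_bot _ _ _ (fun i _ => hB (σ i) i)]
  rfl

lemma det_suppGe (B : Matrix (Fin d) (Fin d) (Kt Fq)) (m : Fin d → ℤ)
    (hB : ∀ i j, SuppGe Fq (B i j) (-(m j))) :
    SuppGe Fq B.det (-(∑ j, m j)) := by
  rw [Matrix.det_apply']
  refine suppGe_sum fun σ _ => ?_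
  intro n hn
  rw [intCast_mul_coeff,
    suppGe_prod Finset.univ _ (fun i => -(m i)) (fun i _ => hB (σ i) i) n
      (by simpa [Finset.sum_neg_distrib] using hn), mul_zero]

lemma hadamard_sum_nonneg (B : Matrix (Fin d) (Fin d) (Kt Fq)) (m : Fin d → ℤ)
    (hdet : Kabs Fq B.det = 1) (hsupp : ∀ i j, SuppGe Fq (B i j) (-(m j))) :
    0 ≤ ∑ j, m j := by
  have h1 : Kabs Fq B.det ≤ qr Fq ^ (∑ j, m j) :=
    Kabs_le_zpow_iff.mpr (det_suppGe B m hsupp)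
  rw [hdet] at h1
  have h2 : qr Fq ^ (0 : ℤ) ≤ qr Fq ^ (∑ j, m j) := by rw [zpow_zero]; exact h1
  exact (zpow_le_zpow_iff_right₀ (one_lt_qr Fq)).mp h2

lemma step (hd : 0 < d) (B : Matrix (Fin d) (Fin d) (Kt Fq)) (m : Fin d → ℤ)
    (hmem : ∀ j, (fun i => B i j) ∈ lattice Fq g) (hdet : Kabs Fq B.det = 1)
    (hsupp : ∀ i j, SuppGe Fq (B i j) (-(m j))) :
    (∃ v ∈ lattice Fq g, v ≠ 0 ∧ ∀ i, Kabs Fq (v i) ≤ 1) ∨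
    (∃ B' : Matrix (Fin d) (Fin d) (Kt Fq), ∃ m' : Fin d → ℤ,
      (∀ j, (fun i => B' i j) ∈ lattice Fq g) ∧ Kabs Fq B'.det = 1 ∧
      (∀ i j, SuppGe Fq (B' i j) (-(m' j))) ∧ (∑ j, m' j) = (∑ j, m j) - 1) := by
  haveI : Nonempty (Fin d) := Fin.pos_iff_nonempty.mp hd
  have hdetne : B.det ≠ 0 := by
    intro h; rw [h] at hdet; simp [Kabs] at hdet
  set lam : Matrix (Fin d) (Fin d) Fq := Matrix.of (fun i j => (B i j).coeff (-(m j))) with hlam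
  by_cases hl : lam.det = 0
  · right
    obtain ⟨c, hcne, hck⟩ := (Matrix.exists_mulVec_eq_zero_iff).mpr hl
    set S : Finset (Fin d) := Finset.univ.filter (fun j => c j ≠ 0) with hS
    have hSne : S.Nonempty := by
      by_contra h
      rw [Finset.not_nonempty_iff_eq_empty] at h
      refine hcne (funext fun j => ?_)
      by_contra hj
      have : j ∈ S := Finset.mem_filter.mpr ⟨Finset.mem_univ _, hj⟩
      simp [h] at this
    obtain ⟨j0, hj0S, hj0max⟩ := Finset.exists_max_image S m hSne
    have hcj0 : c j0 ≠ 0 := (Finset.mem_filter.mp hj0S).2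
    set e : Fin d → ℕ := fun l => (m j0 - m l).toNat with he
    have hel : ∀ l, c l ≠ 0 → (e l : ℤ) = m j0 - m l := by
      intro l hl'
      have h2 := hj0max l (Finset.mem_filter.mpr ⟨Finset.mem_univ _, hl'⟩)
      simp only [he]
      omega
    set a : Fin d → Kt Fq := fun l => HahnSeries.single (-(e l : ℤ)) (c l) with ha
    set b' : Fin d → Kt Fq := fun i => ∑ l, a l * B i l with hb'
    set B' := B.updateCol j0 b' with hB'
    set m' := Function.update m j0 (m j0 - 1) with hm'
    have hcoeff_term : ∀ (i l : Fin d) (n : ℤ),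
        (a l * B i l).coeff n = c l * (B i l).coeff (n + e l) := by
      intro i l n
      have := HahnSeries.coeff_single_mul_add (r := c l) (x := B i l)
        (a := n + (e l : ℤ)) (b := -(e l : ℤ))
      simpa [ha, add_neg_cancel_right] using this
    have hsuppb' : ∀ i, SuppGe Fq (b' i) (-(m j0) + 1) := by
      intro i n hn
      rw [hb', suppGe_coeff_sum]
      rcases (by omega : n < -(m j0) ∨ n = -(m j0)) with hlt | heq
      · refine Finset.sum_eq_zero fun l _ => ?_
        rw [hcoeff_term]
        by_cases hcl : c l = 0
        · rw [hcl, zero_mul]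
        · rw [hsupp i l _ (by have := hel l hcl; omega), mul_zero]
      · subst heq
        have hterm : ∀ l ∈ Finset.univ, (a l * B i l).coeff (-(m j0)) = lam i l * c l := by
          intro l _
          rw [hcoeff_term]
          by_cases hcl : c l = 0
          · rw [hcl, zero_mul, mul_zero]
          · rw [hel l hcl, show -(m j0) + (m j0 - m l) = -(m l) by ring]
            rw [hlam]
            exact mul_comm _ _
        rw [Finset.sum_congr rfl hterm]
        have := congrFun hck i
        simpa [Matrix.mulVec, dotProduct] using this
    refine ⟨B', m', ?_, ?_, ?_, ?_⟩
    · intro j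
      by_cases hj : j = j0
      · rw [hj]
        have hcol : (fun i => B' i j0) = b' := by
          funext i; rw [hB']; simp
        rw [hcol]
        have hb'2 : b' = fun i => ∑ l, polyK Fq (Polynomial.C (c l) * Polynomial.X ^ (e l)) * B i l := by
          funext i
          rw [hb']
          exact Finset.sum_congr rfl fun l _ => by rw [polyK_C_mul_X_pow]
        rw [hb'2]
        exact lattice_sum Finset.univ _ _ (fun l _ => hmem l)
      · have hcol : (fun i => B' i j) = fun i => B i j := by
          funext i; rw [hB']; simp [Matrix.updateCol_ne hj]
        rw [hcol]; exact hmem j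
    · have h1 : b' = (fun k => ∑ l, a l • B k l) := by
        funext k
        show ∑ l, a l * B k l = _
        exact Finset.sum_congr rfl fun l _ => (smul_eq_mul ..).symm
      have hdet' : B'.det = a j0 * B.det := by
        rw [hB', h1, Matrix.det_updateCol_sum, smul_eq_mul]
      rw [hdet', Kabs_mul, hdet, mul_one]
      have he0 : (e j0 : ℤ) = 0 := by rw [hel j0 hcj0]; ring
      have : a j0 = HahnSeries.single (0 : ℤ) (c j0) := by
        rw [ha]; norm_num [he0]
      rw [this, Kabs_single hcj0, neg_zero, zpow_zero]
    · intro i j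
      by_cases hj : j = j0
      · rw [hj]
        have h1 : B' i j0 = b' i := by rw [hB']; simp
        have h2 : m' j0 = m j0 - 1 := by rw [hm']; simp
        rw [h1, h2]
        have := hsuppb' i
        rwa [show -(m j0) + 1 = -(m j0 - 1) by ring] at this
      · have h1 : B' i j = B i j := by rw [hB']; simp [Matrix.updateCol_ne hj]
        have h2 : m' j = m j := by rw [hm']; simp [Function.update_of_ne hj]
        rw [h1, h2]
        exact hsupp i j
    · rw [hm', Finset.sum_update_of_mem (Finset.mem_univ j0),
        Finset.sdiff_singleton_eq_erase,
        ← Finset.add_sum_erase _ m (Finset.mem_univ j0)]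
      ring
  · left
    have hcoeffdet : B.det.coeff (-(∑ j, m j)) = lam.det := det_coeff_bot B m hsupp
    have h1 : qr Fq ^ (∑ j, m j) ≤ Kabs Fq B.det := by
      have := Kabs_ge_of_coeff_ne (f := B.det) (n := -(∑ j, m j))
        (by rw [hcoeffdet]; exact hl)
      simpa using this
    rw [hdet] at h1
    have hsm : (∑ j, m j) ≤ 0 := by
      have h2 : qr Fq ^ (∑ j, m j) ≤ qr Fq ^ (0 : ℤ) := by rw [zpow_zero]; exact h1
      exact (zpow_le_zpow_iff_right₀ (one_lt_qr Fq)).mp h2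
    obtain ⟨j, hj⟩ : ∃ j, m j ≤ 0 := by
      by_contra h
      push_neg at h
      have : (0 : ℤ) < ∑ j, m j := Finset.sum_pos (fun j _ => h j) Finset.univ_nonempty
      omega
    refine ⟨fun i => B i j, hmem j, ?_, ?_⟩
    · intro h0
      exact hdetne (Matrix.det_eq_zero_of_column_eq_zero j (fun i => congrFun h0 i))
    · intro i
      calc Kabs Fq (B i j) ≤ qr Fq ^ (m j) := Kabs_le_zpow_iff.mpr (hsupp i j)
        _ ≤ qr Fq ^ (0 : ℤ) := zpow_le_zpow_right₀ (le_of_lt (one_lt_qr Fq)) hj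
        _ = 1 := zpow_zero _

lemma short_aux (hd : 0 < d) :
    ∀ n : ℕ, ∀ B : Matrix (Fin d) (Fin d) (Kt Fq), ∀ m : Fin d → ℤ,
    (∀ j, (fun i => B i j) ∈ lattice Fq g) → Kabs Fq B.det = 1 →
    (∀ i j, SuppGe Fq (B i j) (-(m j))) → (∑ j, m j) ≤ (n : ℤ) →
    ∃ v ∈ lattice Fq g, v ≠ 0 ∧ ∀ i, Kabs Fq (v i) ≤ 1 := by
  intro n
  induction n with
  | zero =>
      intro B m hmem hdet hsupp hsum
      rcases step hd B m hmem hdet hsupp with h | ⟨B', m', h1, h2, h3, hs⟩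
      · exact h
      · have h4 := hadamard_sum_nonneg B' m' h2 h3
        have h5 := hadamard_sum_nonneg B m hdet hsupp
        omega
  | succ n ih =>
      intro B m hmem hdet hsupp hsum
      rcases step hd B m hmem hdet hsupp with h | ⟨B', m', h1, h2, h3, hs⟩
      · exact h
      · have h4 := hadamard_sum_nonneg B' m' h2 h3
        exact ih B' m' h1 h2 h3 (by omega)

lemma exists_short (hd : 0 < d) (hdet : Kabs Fq g.det = 1) :
    ∃ v ∈ lattice Fq g, v ≠ 0 ∧ ∀ i, Kabs Fq (v i) ≤ 1 := by
  haveI : Nonempty (Fin d) := Fin.pos_iff_nonempty.mp hd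
  have hmem : ∀ j, (fun i => g i j) ∈ lattice Fq g := by
    intro j
    refine ⟨fun k => if k = j then 1 else 0, ?_⟩
    funext i
    simp only [Matrix.mulVec, dotProduct, apply_ite (polyK Fq), map_one, map_zero,
      mul_ite, mul_one, mul_zero]
    rw [Finset.sum_ite_eq' Finset.univ j (fun k => g i k), if_pos (Finset.mem_univ j)]
  set m : Fin d → ℤ := fun j => Finset.univ.sup' Finset.univ_nonempty (fun i => -(g i j).order)
    with hm
  have hsupp : ∀ i j, SuppGe Fq (g i j) (-(m j)) := by
    intro i j n hn
    by_cases h0 : g i j = 0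
    · rw [h0]; exact HahnSeries.coeff_zero
    · refine HahnSeries.coeff_eq_zero_of_lt_order ?_
      have h2 : -(g i j).order ≤ m j := by
        rw [hm]; exact Finset.le_sup' (fun i => -(g i j).order) (Finset.mem_univ i)
      omega
  exact short_aux hd (∑ j, m j).toNat g m hmem hdet hsupp (Int.self_le_toNat _)

lemma vnorm_nonneg {v : Fin d → Kt Fq} : 0 ≤ vnorm Fq v := by
  unfold vnorm
  exact Real.iSup_nonneg fun _ => Kabs_nonneg _

lemma ell_le_one (hd : 0 < d) (hdet : Kabs Fq g.det = 1) : ell Fq (lattice Fq g) ≤ 1 := by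
  haveI : Nonempty (Fin d) := Fin.pos_iff_nonempty.mp hd
  obtain ⟨v, hv, hvne, hvb⟩ := exists_short (g := g) hd hdet
  have h1 : vnorm Fq v ≤ 1 := by
    unfold vnorm
    exact ciSup_le fun i => hvb i
  refine le_trans (csInf_le ?_ ⟨v, hv, hvne, rfl⟩) h1
  refine ⟨0, ?_⟩
  rintro r ⟨w, _, _, rfl⟩
  exact vnorm_nonneg

lemma exists_near (hd : 0 < d) (hdet : Kabs Fq g.det = 1)
    (hwr : IsWellRounded Fq (lattice Fq g)) (w : Fin d → Kt Fq) :
    ∃ u ∈ lattice Fq g, ∀ i, Kabs Fq ((w - u) i) ≤ qr Fq ^ (-1 : ℤ) := by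
  haveI : Nonempty (Fin d) := Fin.pos_iff_nonempty.mp hd
  obtain ⟨vs, hvmem, hvli, hvnorm⟩ := hwr
  have hvb : ∀ j i, Kabs Fq (vs j i) ≤ 1 := by
    intro j i
    have h1 : Kabs Fq (vs j i) ≤ vnorm Fq (vs j) := by
      unfold vnorm
      exact le_ciSup (Set.Finite.bddAbove (Set.finite_range fun i => Kabs Fq (vs j i))) i
    rw [hvnorm j] at h1
    exact le_trans h1 (ell_le_one hd hdet)
  set M : Matrix (Fin d) (Fin d) (Kt Fq) := Matrix.of fun i j => vs j i with hM
  have hMu : IsUnit M := by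
    rw [← Matrix.linearIndependent_cols_iff_isUnit]
    have h2 : M.col = vs := by funext j; funext i; rfl
    rw [h2]; exact hvli
  have hMdu : IsUnit M.det := (Matrix.isUnit_iff_isUnit_det M).mp hMu
  set aa : Fin d → Kt Fq := M⁻¹.mulVec w with haa
  have hw : M.mulVec aa = w := by
    rw [haa, Matrix.mulVec_mulVec, Matrix.mul_nonsing_inv _ hMdu, Matrix.one_mulVec]
  choose p hp using fun j => exists_polyPart (aa j)
  refine ⟨fun i => ∑ j, polyK Fq (p j) * vs j i,
    lattice_sum Finset.univ _ _ (fun l _ => hvmem l), ?_⟩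
  intro i
  refine (Kabs_le_zpow_iff (m := (-1 : ℤ))).mpr ?_
  rw [neg_neg]
  have hwi : (w - fun i => ∑ j, polyK Fq (p j) * vs j i) i
      = ∑ j, vs j i * (aa j - polyK Fq (p j)) := by
    have h3 : w i = ∑ j, vs j i * aa j := by
      rw [← hw]; simp [Matrix.mulVec, dotProduct, hM]
    simp only [Pi.sub_apply, h3]
    rw [← Finset.sum_sub_distrib]
    exact Finset.sum_congr rfl fun j _ => by ring
  rw [hwi]
  refine suppGe_sum fun j _ => ?_
  have h1 : SuppGe Fq (vs j i) 0 := by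
    have := (Kabs_le_zpow_iff (m := (0 : ℤ))).mp (by rw [zpow_zero]; exact hvb j i)
    simpa using this
  have h2 : SuppGe Fq (aa j - polyK Fq (p j)) 1 := hp j
  have h4 := suppGe_mul h1 h2
  simpa using h4

end MinkAux

/-- For every well rounded unimodular lattice, `μ(Λ) ≤ q^{-d}`. -/
theorem mink_le_of_wellRounded {d : ℕ} (hd : 2 ≤ d)
    (g : Matrix (Fin d) (Fin d) (Kt Fq)) (hg : Kabs Fq g.det = 1)
    (hwr : IsWellRounded Fq (lattice Fq g)) :
    mink Fq (lattice Fq g) ≤ (Fintype.card Fq : ℝ) ^ (-(d : ℤ)) := by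
  have hd0 : 0 < d := by omega
  haveI : Nonempty (Fin d) := Fin.pos_iff_nonempty.mp hd0
  have hq0 : (0 : ℝ) < (Fintype.card Fq : ℝ) := MinkAux.qr_pos Fq
  unfold mink
  refine Real.iSup_le (fun w => ?_) (le_of_lt (zpow_pos hq0 _))
  obtain ⟨u, hu, hub⟩ := MinkAux.exists_near hd0 hg hwr w
  have hbd : BddBelow (Set.range fun u : (lattice Fq g) => Nprod Fq (w - u.1)) := by
    refine ⟨0, ?_⟩
    rintro r ⟨u', rfl⟩
    exact Finset.prod_nonneg fun i _ => MinkAux.Kabs_nonneg _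
  refine le_trans (ciInf_le hbd ⟨u, hu⟩) ?_
  unfold Nprod
  calc ∏ i, Kabs Fq ((w - u) i)
      ≤ ∏ _i : Fin d, MinkAux.qr Fq ^ (-1 : ℤ) :=
        Finset.prod_le_prod (fun i _ => MinkAux.Kabs_nonneg _) (fun i _ => hub i)
    _ = (Fintype.card Fq : ℝ) ^ (-(d : ℤ)) := by
        rw [Finset.prod_const, Finset.card_univ, Fintype.card_fin, ← zpow_natCast, ← zpow_mul]
        norm_num
end
end

section
/- Let d ≥ 2. A unimodular lattice Λ ⊆ K̃^d is well rounded if and only if Λ = uR^d for some matrix u with all entries in O and |det u| = 1. In other words, the set of well rounded unimodular lattices equals GL_d(O)·R^d (denoted SL_d(O)R^d in the paper). -/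
noncomputable section

open scoped Classical

variable (Fq : Type) [Field Fq] [Fintype Fq]

namespace WRaux
set_option linter.unusedSectionVars false
set_option linter.unusedVariables false

variable {Fq : Type} [Field Fq] [Fintype Fq]

local notation "q" => ((Fintype.card Fq : ℕ) : ℝ)

lemma one_lt_q : 1 < ((Fintype.card Fq : ℕ) : ℝ) := by exact_mod_cast Fintype.one_lt_card

lemma q_pos : 0 < ((Fintype.card Fq : ℕ) : ℝ) := lt_trans one_pos one_lt_q

lemma Kabs_zero : Kabs Fq 0 = 0 := if_pos rfl

lemma Kabs_of_ne {f : Kt Fq} (h : f ≠ 0) : Kabs Fq f = q ^ (-f.order) := if_neg h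

lemma Kabs_nonneg (f : Kt Fq) : 0 ≤ Kabs Fq f := by
  unfold Kabs; split
  · exact le_refl 0
  · positivity

lemma Kabs_pos {f : Kt Fq} (h : f ≠ 0) : 0 < Kabs Fq f := by
  rw [Kabs_of_ne h]; positivity

lemma Kabs_eq_zero {f : Kt Fq} : Kabs Fq f = 0 ↔ f = 0 := by
  constructor
  · intro h; by_contra hf; exact (Kabs_pos hf).ne' h
  · rintro rfl; exact Kabs_zero

lemma Kabs_one : Kabs Fq 1 = 1 := by
  rw [Kabs_of_ne one_ne_zero, HahnSeries.order_one, neg_zero, zpow_zero]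

lemma Kabs_mul (f g : Kt Fq) : Kabs Fq (f * g) = Kabs Fq f * Kabs Fq g := by
  by_cases hf : f = 0
  · simp [hf, Kabs_zero]
  by_cases hg : g = 0
  · simp [hg, Kabs_zero]
  rw [Kabs_of_ne (mul_ne_zero hf hg), Kabs_of_ne hf, Kabs_of_ne hg,
    HahnSeries.order_mul hf hg, neg_add, zpow_add₀ (ne_of_gt q_pos)]

lemma Kabs_neg (f : Kt Fq) : Kabs Fq (-f) = Kabs Fq f := by
  by_cases hf : f = 0
  · simp [hf, Kabs_zero]
  · rw [Kabs_of_ne (neg_ne_zero.mpr hf), Kabs_of_ne hf, HahnSeries.order_neg]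

/-- `OrdLB f n` : all coefficients of `f` below `n` vanish. -/
def OrdLB (f : Kt Fq) (n : ℤ) : Prop := ∀ m : ℤ, m < n → f.coeff m = 0

lemma ordLB_zero (n : ℤ) : OrdLB (0 : Kt Fq) n := fun m _ => HahnSeries.coeff_zero

lemma Kabs_le_of_ordLB {f : Kt Fq} {n : ℤ} (h : OrdLB f n) : Kabs Fq f ≤ q ^ (-n) := by
  by_cases hf : f = 0
  · rw [hf, Kabs_zero]; positivity
  · rw [Kabs_of_ne hf]
    rw [zpow_le_zpow_iff_right₀ one_lt_q, neg_le_neg_iff]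
    by_contra hlt
    exact HahnSeries.coeff_order_eq_zero.not.mpr hf (h _ (lt_of_not_ge hlt))

lemma ordLB_of_Kabs_le {f : Kt Fq} {n : ℤ} (h : Kabs Fq f ≤ q ^ (-n)) : OrdLB f n := by
  by_cases hf : f = 0
  · rw [hf]; exact ordLB_zero n
  · intro m hm
    rw [Kabs_of_ne hf, zpow_le_zpow_iff_right₀ one_lt_q, neg_le_neg_iff] at h
    exact HahnSeries.coeff_eq_zero_of_lt_order (lt_of_lt_of_le hm h)

lemma ordLB_add {f g : Kt Fq} {n : ℤ} (hf : OrdLB f n) (hg : OrdLB g n) : OrdLB (f + g) n := by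
  intro m hm; rw [HahnSeries.coeff_add, hf m hm, hg m hm, add_zero]


lemma ordLB_mul {f g : Kt Fq} {a b : ℤ} (hf : OrdLB f a) (hg : OrdLB g b) :
    OrdLB (f * g) (a + b) := by
  intro m hm
  by_contra hne
  have hmem := HahnSeries.support_mul_subset (x := f) (y := g) hne
  obtain ⟨i, hi, j, hj, rfl⟩ := hmem
  have hia : a ≤ i := by by_contra h; exact hi (hf i (lt_of_not_ge h))
  have hjb : b ≤ j := by by_contra h; exact hj (hg j (lt_of_not_ge h))
  exact absurd (add_le_add hia hjb) (not_le.mpr hm)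

lemma mul_coeff_boundary {f g : Kt Fq} {a b : ℤ} (hf : OrdLB f a) (hg : OrdLB g b) :
    (f * g).coeff (a + b) = f.coeff a * g.coeff b := by
  rw [HahnSeries.coeff_mul]
  have hsub : Finset.antidiagonal f.isPWO_support g.isPWO_support (a + b) ⊆ {(a, b)} := by
    intro ij hij
    rw [Finset.mem_antidiagonal] at hij
    obtain ⟨h1, h2, h3⟩ := hij
    have hia : a ≤ ij.1 := by by_contra h; exact h1 (hf _ (lt_of_not_ge h))
    have hjb : b ≤ ij.2 := by by_contra h; exact h2 (hg _ (lt_of_not_ge h))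
    have : ij.1 = a := le_antisymm (by omega) hia
    have : ij.2 = b := by omega
    simp only [Finset.mem_singleton, Prod.ext_iff]
    omega
  rw [Finset.sum_subset hsub ?side, Finset.sum_singleton]
  case side =>
    intro x hx hxn
    rw [Finset.mem_singleton] at hx
    subst hx
    rw [Finset.mem_antidiagonal] at hxn
    push_neg at hxn
    by_cases h1 : a ∈ f.support
    · by_cases h2 : b ∈ g.support
      · exact absurd rfl (hxn h1 h2)
      · rw [HahnSeries.mem_support, not_not] at h2
        rw [h2, mul_zero]
    · rw [HahnSeries.mem_support, not_not] at h1
      rw [h1, zero_mul]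

lemma ordLB_sum {ι : Type*} (s : Finset ι) (f : ι → Kt Fq) {n : ℤ}
    (h : ∀ i ∈ s, OrdLB (f i) n) : OrdLB (∑ i ∈ s, f i) n := by
  classical
  induction s using Finset.induction_on with
  | empty => simpa using ordLB_zero n
  | @insert a s' hx ih =>
    rw [Finset.sum_insert hx]
    exact ordLB_add (h a (Finset.mem_insert_self a s'))
      (ih fun i hi => h i (Finset.mem_insert_of_mem hi))

lemma sum_coeff {ι : Type*} (s : Finset ι) (f : ι → Kt Fq) (n : ℤ) :
    (∑ i ∈ s, f i).coeff n = ∑ i ∈ s, (f i).coeff n := by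
  classical
  induction s using Finset.induction_on with
  | empty => simp
  | @insert a s' hx ih =>
    rw [Finset.sum_insert hx, Finset.sum_insert hx, HahnSeries.coeff_add, ih]

lemma ordLB_prod {ι : Type*} (s : Finset ι) (f : ι → Kt Fq) (n : ι → ℤ)
    (h : ∀ i ∈ s, OrdLB (f i) (n i)) :
    OrdLB (∏ i ∈ s, f i) (∑ i ∈ s, n i) ∧
      (∏ i ∈ s, f i).coeff (∑ i ∈ s, n i) = ∏ i ∈ s, (f i).coeff (n i) := by
  classical
  induction s using Finset.induction_on with
  | empty =>
    constructor
    · intro m hm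
      simp only [Finset.prod_empty, Finset.sum_empty] at *
      exact HahnSeries.coeff_eq_zero_of_lt_order (by rwa [HahnSeries.order_one])
    · simp [HahnSeries.coeff_one]
  | @insert a s' hx ih =>
    have ha := h a (Finset.mem_insert_self a s')
    have ih' := ih fun i hi => h i (Finset.mem_insert_of_mem hi)
    rw [Finset.prod_insert hx, Finset.sum_insert hx, Finset.prod_insert hx]
    exact ⟨ordLB_mul ha ih'.1, by rw [mul_coeff_boundary ha ih'.1, ih'.2]⟩


lemma Kabs_add_le (f g : Kt Fq) : Kabs Fq (f + g) ≤ max (Kabs Fq f) (Kabs Fq g) := by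
  by_cases h : f + g = 0
  · rw [h, Kabs_zero]; exact le_max_of_le_left (Kabs_nonneg f)
  by_cases hf : f = 0
  · subst hf; rw [zero_add]; exact le_max_right _ _
  by_cases hg : g = 0
  · subst hg; rw [add_zero]; exact le_max_left _ _
  have hmin := HahnSeries.min_order_le_order_add h
  rw [Kabs_of_ne h, Kabs_of_ne hf, Kabs_of_ne hg]
  rcases le_total f.order g.order with hle | hle
  · refine le_max_of_le_left ?_
    rw [zpow_le_zpow_iff_right₀ one_lt_q, neg_le_neg_iff]
    rwa [min_eq_left hle] at hmin
  · refine le_max_of_le_right ?_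
    rw [zpow_le_zpow_iff_right₀ one_lt_q, neg_le_neg_iff]
    rwa [min_eq_right hle] at hmin

lemma Kabs_sum_le {ι : Type*} (s : Finset ι) (f : ι → Kt Fq) {r : ℝ} (hr : 0 ≤ r)
    (h : ∀ i ∈ s, Kabs Fq (f i) ≤ r) : Kabs Fq (∑ i ∈ s, f i) ≤ r := by
  classical
  induction s using Finset.induction_on with
  | empty => simpa [Kabs_zero] using hr
  | @insert a s' hx ih =>
    rw [Finset.sum_insert hx]
    exact le_trans (Kabs_add_le _ _) (max_le (h a (Finset.mem_insert_self a s'))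
      (ih fun i hi => h i (Finset.mem_insert_of_mem hi)))

lemma Kabs_prod {ι : Type*} (s : Finset ι) (f : ι → Kt Fq) :
    Kabs Fq (∏ i ∈ s, f i) = ∏ i ∈ s, Kabs Fq (f i) := by
  classical
  induction s using Finset.induction_on with
  | empty => simp [Kabs_one]
  | @insert a s' hx ih =>
    rw [Finset.prod_insert hx, Finset.prod_insert hx, Kabs_mul, ih]

lemma Kabs_intUnits (u : ℤˣ) (f : Kt Fq) : Kabs Fq (u • f) = Kabs Fq f := by
  rcases Int.units_eq_one_or u with h | h <;> subst h
  · simp [Units.smul_def]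
  · simp [Units.smul_def, Kabs_neg]


lemma algK (a : Fq) : (algebraMap Fq (LaurentSeries Fq)) a = HahnSeries.single (0:ℤ) a := by
  rw [HahnSeries.algebraMap_apply', PowerSeries.algebraMap_apply, Algebra.algebraMap_self,
    RingHom.id_apply, HahnSeries.ofPowerSeries_C, HahnSeries.C_apply]

lemma polyK_monomial (n : ℕ) (a : Fq) :
    polyK Fq (Polynomial.monomial n a) = HahnSeries.single (-(n : ℤ)) a := by
  unfold polyK Kx
  simp only [AlgHom.toRingHom_eq_coe, RingHom.coe_coe, Polynomial.aeval_monomial]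
  rw [HahnSeries.single_pow, algK, one_pow, HahnSeries.single_mul_single, zero_add, mul_one]
  norm_num

lemma polyK_coeff (c : Polynomial Fq) (n : ℕ) :
    (polyK Fq c).coeff (-(n : ℤ)) = c.coeff n := by
  induction c using Polynomial.induction_on' with
  | add p r hp hr =>
    rw [map_add, HahnSeries.coeff_add, hp, hr, Polynomial.coeff_add]
  | monomial m a =>
    rw [polyK_monomial, HahnSeries.coeff_single, Polynomial.coeff_monomial]
    by_cases h : n = m
    · subst h; simp
    · rw [if_neg (by exact_mod_cast fun hh => h (by exact_mod_cast neg_injective hh)),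
        if_neg (fun hh => h hh.symm)]

lemma polyK_ne_zero {c : Polynomial Fq} (h : c ≠ 0) : polyK Fq c ≠ 0 := by
  intro hz
  have := polyK_coeff (Fq := Fq) c c.natDegree
  rw [hz, HahnSeries.coeff_zero] at this
  exact Polynomial.leadingCoeff_ne_zero.mpr h this.symm

lemma one_le_Kabs_polyK {c : Polynomial Fq} (h : c ≠ 0) : 1 ≤ Kabs Fq (polyK Fq c) := by
  have hne := polyK_ne_zero h
  have hcoeff : (polyK Fq c).coeff (-(c.natDegree : ℤ)) ≠ 0 := by
    rw [polyK_coeff]; exact Polynomial.leadingCoeff_ne_zero.mpr h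
  have hord : (polyK Fq c).order ≤ -(c.natDegree : ℤ) :=
    HahnSeries.order_le_of_coeff_ne_zero hcoeff
  rw [Kabs_of_ne hne]
  calc (1 : ℝ) = q ^ (0 : ℤ) := by rw [zpow_zero]
  _ ≤ q ^ (-(polyK Fq c).order) := by
      rw [zpow_le_zpow_iff_right₀ one_lt_q]; omega

lemma Kabs_le_vnorm {d : ℕ} (v : Fin d → Kt Fq) (i : Fin d) :
    Kabs Fq (v i) ≤ vnorm Fq v :=
  le_ciSup (f := fun i => Kabs Fq (v i)) (Set.Finite.bddAbove (Set.finite_range _)) i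

lemma vnorm_le {d : ℕ} [Nonempty (Fin d)] {v : Fin d → Kt Fq} {r : ℝ}
    (h : ∀ i, Kabs Fq (v i) ≤ r) : vnorm Fq v ≤ r := ciSup_le h

lemma vnorm_nonneg {d : ℕ} [Nonempty (Fin d)] (v : Fin d → Kt Fq) : 0 ≤ vnorm Fq v :=
  le_trans (Kabs_nonneg _) (Kabs_le_vnorm v (Classical.arbitrary _))

lemma exists_vnorm_eq {d : ℕ} [Nonempty (Fin d)] (v : Fin d → Kt Fq) :
    ∃ i, vnorm Fq v = Kabs Fq (v i) := by
  obtain ⟨i, hi⟩ := Finite.exists_max (fun i => Kabs Fq (v i))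
  exact ⟨i, le_antisymm (vnorm_le hi) (Kabs_le_vnorm v i)⟩

lemma vnorm_pos {d : ℕ} [Nonempty (Fin d)] {v : Fin d → Kt Fq} (h : v ≠ 0) :
    0 < vnorm Fq v := by
  obtain ⟨i, hi⟩ : ∃ i, v i ≠ 0 := by
    by_contra hc; push_neg at hc; exact h (funext hc)
  exact lt_of_lt_of_le (Kabs_pos hi) (Kabs_le_vnorm v i)

/-- Ultrametric Hadamard bound: `|det M| ≤ ∏ column norms`. -/
lemma Kabs_det_le {d : ℕ} [Nonempty (Fin d)] (M : Matrix (Fin d) (Fin d) (Kt Fq)) :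
    Kabs Fq M.det ≤ ∏ j, vnorm Fq (fun i => M i j) := by
  rw [Matrix.det_apply]
  apply Kabs_sum_le _ _ (Finset.prod_nonneg fun j _ => vnorm_nonneg _)
  intro σ _
  rw [Kabs_intUnits, Kabs_prod]
  exact Finset.prod_le_prod (fun i _ => Kabs_nonneg _)
    (fun i _ => Kabs_le_vnorm (fun r => M r i) (σ i))


section Lattice

variable {d : ℕ}

lemma polyK_single_apply (j l : Fin d) :
    polyK Fq (Pi.single (M := fun _ => Polynomial Fq) j 1 l)
      = Pi.single (M := fun _ => Kt Fq) j 1 l := by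
  by_cases h : l = j
  · subst h; simp
  · simp [Pi.single_apply, if_neg h]

lemma col_mem_lattice (g : Matrix (Fin d) (Fin d) (Kt Fq)) (j : Fin d) :
    (fun i => g i j) ∈ lattice Fq g := by
  refine ⟨Pi.single j 1, ?_⟩
  funext i
  simp only [polyK_single_apply]
  rw [Matrix.mulVec_single]
  simp

lemma map_mulVec_polyK (B : Matrix (Fin d) (Fin d) (Polynomial Fq)) (c : Fin d → Polynomial Fq) :
    (B.map (polyK Fq)).mulVec (fun j => polyK Fq (c j)) = fun i => polyK Fq (B.mulVec c i) := by
  funext i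
  simp [Matrix.mulVec, dotProduct, Matrix.map_apply, map_sum, map_mul]

lemma lattice_mul_eq (g : Matrix (Fin d) (Fin d) (Kt Fq))
    (B : Matrix (Fin d) (Fin d) (Polynomial Fq)) (hB : IsUnit B.det) :
    lattice Fq (g * B.map (polyK Fq)) = lattice Fq g := by
  ext v
  constructor
  · rintro ⟨c, rfl⟩
    refine ⟨B.mulVec c, ?_⟩
    rw [← Matrix.mulVec_mulVec, map_mulVec_polyK]
  · rintro ⟨c, rfl⟩
    refine ⟨B⁻¹.mulVec c, ?_⟩
    rw [← Matrix.mulVec_mulVec, map_mulVec_polyK]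
    congr 1
    funext i
    rw [Matrix.mulVec_mulVec, Matrix.mul_nonsing_inv _ hB, Matrix.one_mulVec]

lemma col_ne_zero_of_det {h : Matrix (Fin d) (Fin d) (Kt Fq)} (hdet : h.det ≠ 0) (j : Fin d) :
    (fun i => h i j) ≠ 0 := by
  intro hz
  exact hdet (Matrix.det_eq_zero_of_column_eq_zero j (fun i => congrFun hz i))

lemma Kabs_det_le_one {M : Matrix (Fin d) (Fin d) (Kt Fq)} [Nonempty (Fin d)]
    (h : ∀ i j, Kabs Fq (M i j) ≤ 1) : Kabs Fq M.det ≤ 1 := by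
  refine le_trans (Kabs_det_le M) (Finset.prod_le_one (fun j _ => vnorm_nonneg _) ?_)
  exact fun j _ => vnorm_le (fun i => h i j)

lemma one_le_vnorm_lattice [Nonempty (Fin d)] {u : Matrix (Fin d) (Fin d) (Kt Fq)}
    (hent : ∀ i j, Kabs Fq (u i j) ≤ 1) (hdet : Kabs Fq u.det = 1)
    {v : Fin d → Kt Fq} (hv : v ∈ lattice Fq u) (hvne : v ≠ 0) : 1 ≤ vnorm Fq v := by
  obtain ⟨c, rfl⟩ := hv
  have hc : c ≠ 0 := by
    rintro rfl
    apply hvne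
    have : (fun j => polyK Fq ((0 : Fin d → Polynomial Fq) j)) = 0 := by
      funext j; simp
    rw [this, Matrix.mulVec_zero]
  obtain ⟨j0, hj0⟩ : ∃ j, c j ≠ 0 := by
    by_contra hcc; push_neg at hcc; exact hc (funext hcc)
  set pc : Fin d → Kt Fq := fun j => polyK Fq (c j) with hpc
  have hw : (u.adjugate).mulVec (u.mulVec pc) j0 = u.det * pc j0 := by
    rw [Matrix.mulVec_mulVec, Matrix.adjugate_mul]
    simp [Matrix.mulVec, dotProduct, Matrix.smul_apply, Matrix.one_apply,
      ite_mul, mul_ite]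
  have h1 : 1 ≤ Kabs Fq ((u.adjugate).mulVec (u.mulVec pc) j0) := by
    rw [hw, Kabs_mul, hdet, one_mul]
    exact one_le_Kabs_polyK hj0
  refine le_trans h1 ?_
  have : (u.adjugate).mulVec (u.mulVec pc) j0
      = ∑ i, u.adjugate j0 i * (u.mulVec pc) i := rfl
  rw [this]
  apply Kabs_sum_le _ _ (vnorm_nonneg _)
  intro l _
  rw [Kabs_mul]
  have hadj : Kabs Fq (u.adjugate j0 l) ≤ 1 := by
    rw [Matrix.adjugate_apply]
    apply Kabs_det_le_one
    intro a b
    by_cases ha : a = l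
    · subst ha
      rw [Matrix.updateRow_self]
      by_cases hb : b = j0
      · subst hb; simp [Kabs_one]
      · simp [Pi.single_apply, if_neg hb, Kabs_zero]
    · rw [Matrix.updateRow_ne ha]; exact hent a b
  calc Kabs Fq (u.adjugate j0 l) * Kabs Fq ((u.mulVec pc) l)
      ≤ 1 * Kabs Fq ((u.mulVec pc) l) :=
        mul_le_mul_of_nonneg_right hadj (Kabs_nonneg _)
  _ = Kabs Fq ((u.mulVec pc) l) := one_mul _
  _ ≤ vnorm Fq (u.mulVec pc) := Kabs_le_vnorm _ l

/-- Lower bound for vectors of a reduced basis lattice. -/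
lemma reduced_mulVec_lb [Nonempty (Fin d)] {h : Matrix (Fin d) (Fin d) (Kt Fq)}
    (hdet : h.det ≠ 0) (hred : Kabs Fq h.det = ∏ j, vnorm Fq (fun i => h i j))
    (c : Fin d → Polynomial Fq) (k : Fin d) :
    Kabs Fq (polyK Fq (c k)) * vnorm Fq (fun i => h i k)
      ≤ vnorm Fq (h.mulVec fun j => polyK Fq (c j)) := by
  set pc : Fin d → Kt Fq := fun j => polyK Fq (c j) with hpc
  set v : Fin d → Kt Fq := h.mulVec pc with hv
  have hdetup : (h.updateCol k v).det = h.det * pc k := by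
    rw [← Matrix.cramer_apply, Matrix.cramer_eq_adjugate_mulVec, hv,
      Matrix.mulVec_mulVec, Matrix.adjugate_mul]
    simp [Matrix.mulVec, dotProduct, Matrix.smul_apply, Matrix.one_apply,
      ite_mul, mul_ite]
  have hHad := Kabs_det_le (h.updateCol k v)
  rw [hdetup, Kabs_mul] at hHad
  have hcols : ∀ j, vnorm Fq (fun i => (h.updateCol k v) i j)
      = if j = k then vnorm Fq v else vnorm Fq (fun i => h i j) := by
    intro j
    by_cases hj : j = k
    · subst hj
      simp only [if_pos rfl]
      congr 1; funext i; rw [Matrix.updateCol_self]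
    · simp only [if_neg hj]
      congr 1; funext i; rw [Matrix.updateCol_ne hj]
  have hprod : ∏ j, vnorm Fq (fun i => (h.updateCol k v) i j)
      = vnorm Fq v * ∏ j ∈ Finset.univ.erase k, vnorm Fq (fun i => h i j) := by
    rw [← Finset.mul_prod_erase Finset.univ _ (Finset.mem_univ k)]
    rw [hcols k, if_pos rfl]
    congr 1
    apply Finset.prod_congr rfl
    intro j hj
    rw [hcols j, if_neg (Finset.ne_of_mem_erase hj)]
  rw [hprod] at hHad
  have hP : (0 : ℝ) < ∏ j ∈ Finset.univ.erase k, vnorm Fq (fun i => h i j) :=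
    Finset.prod_pos (fun j _ => vnorm_pos (col_ne_zero_of_det hdet j))
  have hsplit : Kabs Fq h.det
      = vnorm Fq (fun i => h i k) * ∏ j ∈ Finset.univ.erase k, vnorm Fq (fun i => h i j) := by
    rw [hred, ← Finset.mul_prod_erase Finset.univ _ (Finset.mem_univ k)]
  rw [hsplit] at hHad
  have := le_of_mul_le_mul_right (by
    calc Kabs Fq (polyK Fq (c k)) * vnorm Fq (fun i => h i k)
        * ∏ j ∈ Finset.univ.erase k, vnorm Fq (fun i => h i j)
        = vnorm Fq (fun i => h i k) * (∏ j ∈ Finset.univ.erase k, vnorm Fq (fun i => h i j))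
          * Kabs Fq (pc k) := by ring
    _ ≤ vnorm Fq v * ∏ j ∈ Finset.univ.erase k, vnorm Fq (fun i => h i j) := hHad
    ) hP
  exact this

end Lattice

section Reduce

variable {d : ℕ}

lemma ordLB_succ_of_coeff_zero {f : Kt Fq} {n : ℤ} (h : OrdLB f n) (hc : f.coeff n = 0) :
    OrdLB f (n + 1) := by
  intro m hm
  rcases lt_or_eq_of_le (Int.lt_add_one_iff.mp hm) with h1 | h1
  · exact h m h1
  · rw [h1]; exact hc

lemma q_zpow_le_Kabs {f : Kt Fq} {n : ℤ} (h : f.coeff n ≠ 0) :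
    ((Fintype.card Fq : ℕ) : ℝ) ^ (-n) ≤ Kabs Fq f := by
  have hf : f ≠ 0 := by rintro rfl; exact h HahnSeries.coeff_zero
  rw [Kabs_of_ne hf, zpow_le_zpow_iff_right₀ one_lt_q, neg_le_neg_iff]
  exact HahnSeries.order_le_of_coeff_ne_zero h

lemma ordLB_intUnits (u : ℤˣ) {f : Kt Fq} {n : ℤ} (h : OrdLB f n) : OrdLB (u • f) n := by
  intro m hm
  rcases Int.units_eq_one_or u with h1 | h1 <;> subst h1 <;>
    simp [Units.smul_def, h m hm]

lemma intUnits_smul_coeff (u : ℤˣ) (f : Kt Fq) (n : ℤ) :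
    (u • f).coeff n = (u : ℤ) • f.coeff n := by
  rcases Int.units_eq_one_or u with h1 | h1 <;> subst h1 <;> simp [Units.smul_def]

lemma q_zpow_sum {ι : Type*} (s : Finset ι) (f : ι → ℤ) :
    ((Fintype.card Fq : ℕ) : ℝ) ^ (∑ j ∈ s, f j) = ∏ j ∈ s, ((Fintype.card Fq : ℕ) : ℝ) ^ (f j) := by
  classical
  induction s using Finset.induction_on with
  | empty => simp
  | @insert a s' hx ih =>
    rw [Finset.sum_insert hx, Finset.prod_insert hx, zpow_add₀ (ne_of_gt (q_pos (Fq := Fq))), ih]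

/-- Main reduction: every nonsingular lattice basis can be replaced by a reduced one. -/
lemma reduce_aux [Nonempty (Fin d)] :
    ∀ n : ℕ, ∀ g : Matrix (Fin d) (Fin d) (Kt Fq), g.det ≠ 0 →
    ∀ m : Fin d → ℤ, (∀ j, vnorm Fq (fun i => g i j) = ((Fintype.card Fq : ℕ) : ℝ) ^ (m j)) →
    ((∑ j, m j) + g.det.order).toNat = n →
    ∃ h, lattice Fq g = lattice Fq h ∧ Kabs Fq h.det = Kabs Fq g.det ∧ h.det ≠ 0 ∧
      Kabs Fq h.det = ∏ j, vnorm Fq (fun i => h i j) := by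
  intro n
  induction n using Nat.strong_induction_on with
  | _ n IH =>
  intro g hdet m hm hn
  have hcolLB : ∀ i j, OrdLB (g i j) (-(m j)) := by
    intro i j
    apply ordLB_of_Kabs_le
    rw [neg_neg, ← hm j]
    exact Kabs_le_vnorm (fun i => g i j) i
  set W : Matrix (Fin d) (Fin d) Fq := fun i j => (g i j).coeff (-(m j)) with hW
  have hterm : ∀ σ : Equiv.Perm (Fin d),
      OrdLB (∏ i, g (σ i) i) (∑ i, -(m i)) ∧
        (∏ i, g (σ i) i).coeff (∑ i, -(m i)) = ∏ i, W (σ i) i :=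
    fun σ => ordLB_prod Finset.univ (fun i => g (σ i) i) (fun i => -(m i))
      (fun i _ => hcolLB (σ i) i)
  have hdetLB : OrdLB g.det (∑ i, -(m i)) := by
    rw [Matrix.det_apply]
    exact ordLB_sum _ _ (fun σ _ => ordLB_intUnits _ (hterm σ).1)
  have hdetcoeff : g.det.coeff (∑ i, -(m i)) = W.det := by
    rw [Matrix.det_apply, sum_coeff, Matrix.det_apply]
    apply Finset.sum_congr rfl
    intro σ _
    rw [intUnits_smul_coeff, (hterm σ).2]
    simp [Units.smul_def]
  by_cases hWdet : W.det ≠ 0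
  · -- already reduced
    refine ⟨g, rfl, rfl, hdet, ?_⟩
    have h1 : Kabs Fq g.det ≤ ((Fintype.card Fq : ℕ) : ℝ) ^ (-(∑ i, -(m i))) :=
      Kabs_le_of_ordLB hdetLB
    have h2 : ((Fintype.card Fq : ℕ) : ℝ) ^ (-(∑ i, -(m i))) ≤ Kabs Fq g.det := by
      apply q_zpow_le_Kabs
      rw [hdetcoeff]; exact hWdet
    have : Kabs Fq g.det = ((Fintype.card Fq : ℕ) : ℝ) ^ (∑ i, m i) := by
      rw [le_antisymm h1 h2]; congr 1; simp
    rw [this, q_zpow_sum]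
    exact Finset.prod_congr rfl (fun j _ => (hm j).symm)
  · push_neg at hWdet
    obtain ⟨a, hane, hWa⟩ := (Matrix.exists_mulVec_eq_zero_iff).mpr hWdet
    have hs : (Finset.univ.filter (fun j => a j ≠ 0)).Nonempty := by
      obtain ⟨j, hj⟩ : ∃ j, a j ≠ 0 := by
        by_contra hcc; push_neg at hcc; exact hane (funext hcc)
      exact ⟨j, Finset.mem_filter.mpr ⟨Finset.mem_univ j, hj⟩⟩
    obtain ⟨k, hk, hkmax⟩ := Finset.exists_max_image _ m hs
    have hak : a k ≠ 0 := (Finset.mem_filter.mp hk).2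
    set B : Matrix (Fin d) (Fin d) (Polynomial Fq) :=
      (1 : Matrix (Fin d) (Fin d) (Polynomial Fq)).updateCol k
        (fun j => Polynomial.C (a j) * Polynomial.X ^ ((m k - m j).toNat)) with hB
    have hBdet : B.det = Polynomial.C (a k) := by
      rw [hB, ← Matrix.cramer_apply, Matrix.cramer_one]
      simp
    have hBunit : IsUnit B.det := by
      rw [hBdet]; exact Polynomial.isUnit_C.mpr hak.isUnit
    set h' : Matrix (Fin d) (Fin d) (Kt Fq) := g * B.map (polyK Fq) with hh'
    have hlat : lattice Fq h' = lattice Fq g := lattice_mul_eq g B hBunit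
    have hpolyC : ∀ b : Fq, polyK Fq (Polynomial.C b) = HahnSeries.single (0 : ℤ) b := by
      intro b
      rw [show Polynomial.C b = Polynomial.monomial 0 b from (Polynomial.monomial_zero_left (a := b)).symm,
        polyK_monomial]
      norm_num
    have hmapdet : (B.map (polyK Fq)).det = HahnSeries.single (0:ℤ) (a k) := by
      rw [show B.map ⇑(polyK Fq) = (polyK Fq).mapMatrix B from rfl, ← RingHom.map_det, hBdet,
        hpolyC]
    have hsingle_ne : (HahnSeries.single (0:ℤ) (a k) : Kt Fq) ≠ 0 :=
      HahnSeries.single_ne_zero hak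
    have hdet'ne : h'.det ≠ 0 := by
      rw [hh', Matrix.det_mul, hmapdet]; exact mul_ne_zero hdet hsingle_ne
    have hKdet' : Kabs Fq h'.det = Kabs Fq g.det := by
      rw [hh', Matrix.det_mul, hmapdet, Kabs_mul, Kabs_of_ne hsingle_ne,
        HahnSeries.order_single hak]
      norm_num
    have hord' : h'.det.order = g.det.order := by
      rw [hh', Matrix.det_mul, hmapdet, HahnSeries.order_mul hdet hsingle_ne,
        HahnSeries.order_single hak, add_zero]
    have hcolj : ∀ j, j ≠ k → (fun i => h' i j) = (fun i => g i j) := by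
      intro j hj
      funext i
      rw [hh', Matrix.mul_apply]
      have hBj : ∀ l, (B.map (polyK Fq)) l j = if l = j then 1 else 0 := by
        intro l
        rw [Matrix.map_apply, hB, Matrix.updateCol_ne hj, Matrix.one_apply]
        split <;> simp
      simp only [hBj, mul_ite, mul_one, mul_zero]
      simp
    have hcolkOrd : ∀ i, OrdLB (h' i k) (-(m k) + 1) := by
      intro i
      have htl : ∀ l, OrdLB (g i l * polyK Fq (Polynomial.C (a l)
            * Polynomial.X ^ ((m k - m l).toNat))) (-(m k)) ∧
          (g i l * polyK Fq (Polynomial.C (a l)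
            * Polynomial.X ^ ((m k - m l).toNat))).coeff (-(m k)) = W i l * a l := by
        intro l
        by_cases hal : a l = 0
        · rw [hal]
          simp only [Polynomial.C_0, zero_mul, map_zero, mul_zero]
          exact ⟨ordLB_zero _, by simp [hal]⟩
        · have hml : m l ≤ m k := hkmax l (Finset.mem_filter.mpr ⟨Finset.mem_univ l, hal⟩)
          have he : (((m k - m l).toNat : ℕ) : ℤ) = m k - m l := Int.toNat_of_nonneg (by omega)
          have hsingle : polyK Fq (Polynomial.C (a l) * Polynomial.X ^ ((m k - m l).toNat))
              = HahnSeries.single (-(m k - m l)) (a l) := by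
            rw [Polynomial.C_mul_X_pow_eq_monomial, polyK_monomial, he]
          rw [hsingle]
          have hsLB : OrdLB (HahnSeries.single (-(m k - m l)) (a l) : Kt Fq) (-(m k - m l)) := by
            intro mm hmm
            exact HahnSeries.coeff_single_of_ne (ne_of_lt hmm)
          have heq : -(m l) + -(m k - m l) = -(m k) := by ring
          constructor
          · have := ordLB_mul (hcolLB i l) hsLB
            rwa [heq] at this
          · have := mul_coeff_boundary (hcolLB i l) hsLB
            rw [heq] at this
            rw [this, HahnSeries.coeff_single_same]
      have hsum : h' i k = ∑ l, g i l * polyK Fq (Polynomial.C (a l)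
          * Polynomial.X ^ ((m k - m l).toNat)) := by
        rw [hh', Matrix.mul_apply]
        refine Finset.sum_congr rfl (fun l _ => ?_)
        rw [Matrix.map_apply, hB, Matrix.updateCol_self]
      have h0 : OrdLB (h' i k) (-(m k)) := by
        rw [hsum]; exact ordLB_sum _ _ (fun l _ => (htl l).1)
      have hc0 : (h' i k).coeff (-(m k)) = 0 := by
        rw [hsum, sum_coeff]
        rw [Finset.sum_congr rfl (fun l _ => (htl l).2)]
        have hWa' := congrFun hWa i
        simpa [Matrix.mulVec, dotProduct] using hWa'
      exact ordLB_succ_of_coeff_zero h0 hc0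
    have hKcolk : vnorm Fq (fun i => h' i k)
        ≤ ((Fintype.card Fq : ℕ) : ℝ) ^ (m k - 1) := by
      apply vnorm_le; intro i
      have hb := Kabs_le_of_ordLB (hcolkOrd i)
      have : -(-(m k) + 1) = m k - 1 := by ring
      rwa [this] at hb
    have hcolkne : (fun i => h' i k) ≠ 0 := col_ne_zero_of_det hdet'ne k
    obtain ⟨i0, hi0⟩ := exists_vnorm_eq (Fq := Fq) (fun i => h' i k)
    have hi0ne : h' i0 k ≠ 0 := by
      intro hz; rw [hz, Kabs_zero] at hi0; exact (vnorm_pos hcolkne).ne' hi0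
    set m' : Fin d → ℤ := fun j => if j = k then -(h' i0 k).order else m j with hm'def
    have hm' : ∀ j, vnorm Fq (fun i => h' i j) = ((Fintype.card Fq : ℕ) : ℝ) ^ (m' j) := by
      intro j; by_cases hj : j = k
      · subst hj; rw [hi0, Kabs_of_ne hi0ne]; simp [hm'def]
      · rw [hcolj j hj, hm j]; simp [hm'def, hj]
    have hmk' : m' k ≤ m k - 1 := by
      have hb : ((Fintype.card Fq : ℕ) : ℝ) ^ (m' k)
          ≤ ((Fintype.card Fq : ℕ) : ℝ) ^ (m k - 1) := by
        rw [← hm' k]; exact hKcolk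
      exact (zpow_le_zpow_iff_right₀ one_lt_q).mp hb
    have hHad' : Kabs Fq h'.det ≤ ∏ j, vnorm Fq (fun i => h' i j) := Kabs_det_le h'
    have hprod' : ∏ j, vnorm Fq (fun i => h' i j)
        = ((Fintype.card Fq : ℕ) : ℝ) ^ (∑ j, m' j) := by
      rw [q_zpow_sum]; exact Finset.prod_congr rfl (fun j _ => hm' j)
    have hnonneg : 0 ≤ (∑ j, m' j) + h'.det.order := by
      have h1 : ((Fintype.card Fq : ℕ) : ℝ) ^ (-(h'.det.order))
          ≤ ((Fintype.card Fq : ℕ) : ℝ) ^ (∑ j, m' j) := by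
        rw [← hprod', ← Kabs_of_ne hdet'ne]; exact hHad'
      have := (zpow_le_zpow_iff_right₀ (one_lt_q (Fq := Fq))).mp h1
      omega
    have hsum' : (∑ j, m' j) ≤ (∑ j, m j) - 1 := by
      have h1 : ∑ j, m' j = m' k + ∑ j ∈ Finset.univ.erase k, m j := by
        rw [← Finset.add_sum_erase _ m' (Finset.mem_univ k)]
        congr 1
        exact Finset.sum_congr rfl (fun j hj => by simp [hm'def, Finset.ne_of_mem_erase hj])
      have h2 : ∑ j, m j = m k + ∑ j ∈ Finset.univ.erase k, m j :=
        (Finset.add_sum_erase _ m (Finset.mem_univ k)).symm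
      omega
    have hmeas : ((∑ j, m' j) + h'.det.order).toNat < n := by
      rw [hord']
      rw [hord'] at hnonneg
      omega
    obtain ⟨h, hl1, hk1, hk2, hk3⟩ := IH _ hmeas h' hdet'ne m' hm' rfl
    exact ⟨h, by rw [← hlat, hl1], by rw [hk1, hKdet'], hk2, hk3⟩

lemma exists_reduced [Nonempty (Fin d)] (g : Matrix (Fin d) (Fin d) (Kt Fq))
    (hdet : g.det ≠ 0) :
    ∃ h, lattice Fq g = lattice Fq h ∧ Kabs Fq h.det = Kabs Fq g.det ∧ h.det ≠ 0 ∧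
      Kabs Fq h.det = ∏ j, vnorm Fq (fun i => h i j) := by
  have hm : ∀ j, ∃ mj : ℤ, vnorm Fq (fun i => g i j) = ((Fintype.card Fq : ℕ) : ℝ) ^ mj := by
    intro j
    obtain ⟨i0, hi0⟩ := exists_vnorm_eq (Fq := Fq) (fun i => g i j)
    have hne : g i0 j ≠ 0 := by
      intro hz; rw [hz, Kabs_zero] at hi0
      exact (vnorm_pos (col_ne_zero_of_det hdet j)).ne' hi0
    exact ⟨-(g i0 j).order, by rw [hi0, Kabs_of_ne hne]⟩
  choose m hm using hm
  exact reduce_aux _ g hdet m hm rfl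

end Reduce

end WRaux

open WRaux in
theorem wellRounded_iff_aux {d : ℕ} (hd : 2 ≤ d)
    (g : Matrix (Fin d) (Fin d) (Kt Fq)) (hg : Kabs Fq g.det = 1) :
    IsWellRounded Fq (lattice Fq g) ↔
      ∃ u : Matrix (Fin d) (Fin d) (Kt Fq),
        (∀ i j, Kabs Fq (u i j) ≤ 1) ∧ Kabs Fq u.det = 1 ∧
        lattice Fq g = lattice Fq u := by
  have hne : Nonempty (Fin d) := ⟨⟨0, by omega⟩⟩
  constructor
  · rintro ⟨v, hvmem, hvind, hvnorm⟩
    have hdet : g.det ≠ 0 := by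
      intro hz; rw [hz, Kabs_zero] at hg; exact zero_ne_one hg
    obtain ⟨h, hlat, hKdet, hdet', hred⟩ := exists_reduced g hdet
    have hKdet1 : Kabs Fq h.det = 1 := by rw [hKdet, hg]
    set S : Set ℝ := {r : ℝ | ∃ w ∈ lattice Fq g, w ≠ 0 ∧ vnorm Fq w = r} with hS
    have hbdd : BddBelow S := by
      refine ⟨0, fun r hr => ?_⟩
      obtain ⟨w, _, _, hw⟩ := hr
      rw [← hw]; exact vnorm_nonneg w
    have hellS : ell Fq (lattice Fq g) = sInf S := rfl
    set L := ell Fq (lattice Fq g) with hL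
    have hv0ne : ∀ j, v j ≠ 0 := fun j => hvind.ne_zero j
    have hLpos : 0 < L := by
      rw [← hvnorm (Classical.arbitrary _)]
      exact vnorm_pos (hv0ne _)
    have hcol_le : ∀ j, L ≤ vnorm Fq (fun i => h i j) := by
      intro j
      apply csInf_le hbdd
      exact ⟨fun i => h i j, by rw [hlat]; exact col_mem_lattice h j,
        col_ne_zero_of_det hdet' j, rfl⟩
    -- choose polynomial coordinates for the WR vectors
    have hvmem' : ∀ j, v j ∈ lattice Fq h := fun j => hlat ▸ hvmem j
    choose c hc using hvmem'
    have hcol_ge : ∀ j, vnorm Fq (fun i => h i j) ≤ L := by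
      intro j0
      by_contra hgt
      push_neg at hgt
      have hczero : ∀ i, c i j0 = 0 := by
        intro i
        by_contra hcne
        have hlb := reduced_mulVec_lb hdet' hred (c i) j0
        rw [← hc i] at hlb
        have h1 : 1 ≤ Kabs Fq (polyK Fq (c i j0)) := one_le_Kabs_polyK hcne
        have h2 : vnorm Fq (fun i' => h i' j0) ≤ Kabs Fq (polyK Fq (c i j0))
            * vnorm Fq (fun i' => h i' j0) := by
          nlinarith [vnorm_pos (col_ne_zero_of_det hdet' j0)]
        have := le_trans h2 hlb
        rw [hvnorm i] at this
        exact absurd (lt_of_lt_of_le hgt this) (lt_irrefl L)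
      -- independence contradiction
      have hpcind : LinearIndependent (Kt Fq) (fun i => fun j => polyK Fq (c i j)) := by
        apply LinearIndependent.of_comp h.mulVecLin
        have hvcomp : (⇑h.mulVecLin ∘ fun i j => polyK Fq (c i j)) = v := by
          funext i; rw [hc i]; rfl
        rw [hvcomp]; exact hvind
      have hspan := hpcind.span_eq_top_of_card_eq_finrank (by
        simp [Module.finrank_pi])
      have hmem : (Pi.single (M := fun _ : Fin d => Kt Fq) j0 1) ∈
          Submodule.span (Kt Fq) (Set.range (fun i => fun j => polyK Fq (c i j))) := by
        rw [hspan]; trivial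
      have hzero : ∀ w ∈ Submodule.span (Kt Fq)
          (Set.range (fun i => fun j => polyK Fq (c i j))), w j0 = (0 : Kt Fq) := by
        intro w hw
        refine Submodule.span_induction ?_ ?_ ?_ ?_ hw
        · rintro w' ⟨i, rfl⟩
          simp [hczero i]
        · rfl
        · intro x y _ _ hx hy
          rw [Pi.add_apply, hx, hy, add_zero]
        · intro r x _ hx
          rw [Pi.smul_apply, hx, smul_zero]
      have := hzero _ hmem
      rw [Pi.single_eq_same] at this
      exact one_ne_zero this
    have hcol_eq : ∀ j, vnorm Fq (fun i => h i j) = L :=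
      fun j => le_antisymm (hcol_ge j) (hcol_le j)
    have hLd : L ^ d = 1 := by
      have : ∏ j : Fin d, vnorm Fq (fun i => h i j) = L ^ d := by
        rw [Finset.prod_congr rfl (fun j _ => hcol_eq j), Finset.prod_const,
          Finset.card_univ, Fintype.card_fin]
      rw [← this, ← hred, hKdet1]
    have hL1 : L = 1 := by
      rcases lt_trichotomy L 1 with hlt | heq | hgt
      · exfalso
        have hcon : L ^ d < 1 := pow_lt_one₀ (le_of_lt hLpos) hlt (by omega : d ≠ 0)
        rw [hLd] at hcon; exact lt_irrefl 1 hcon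
      · exact heq
      · exfalso
        have hcon : 1 < L ^ d := one_lt_pow₀ hgt (by omega : d ≠ 0)
        rw [hLd] at hcon; exact lt_irrefl 1 hcon
    refine ⟨h, ?_, hKdet1, hlat⟩
    intro i j
    calc Kabs Fq (h i j) ≤ vnorm Fq (fun i' => h i' j) := Kabs_le_vnorm (fun i' => h i' j) i
    _ = 1 := by rw [hcol_eq j, hL1]
  · rintro ⟨u, hent, hudet, hlat⟩
    rw [hlat]
    have hdetne : u.det ≠ 0 := by
      intro hz; rw [hz, Kabs_zero] at hudet; exact zero_ne_one hudet
    have hcol1 : ∀ j, vnorm Fq (fun i => u i j) = 1 := by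
      intro j
      refine le_antisymm (vnorm_le (fun i => hent i j)) ?_
      exact one_le_vnorm_lattice hent hudet (col_mem_lattice u j)
        (col_ne_zero_of_det hdetne j)
    have hbdd : ∀ r ∈ {r : ℝ | ∃ w ∈ lattice Fq u, w ≠ 0 ∧ vnorm Fq w = r}, 1 ≤ r := by
      rintro r ⟨w, hw, hwne, rfl⟩
      exact one_le_vnorm_lattice hent hudet hw hwne
    have hell : ell Fq (lattice Fq u) = 1 := by
      apply le_antisymm
      · apply csInf_le ⟨1, fun r hr => hbdd r hr⟩
        exact ⟨fun i => u i (Classical.arbitrary _), col_mem_lattice u _,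
          col_ne_zero_of_det hdetne _, hcol1 _⟩
      · exact le_csInf ⟨1, fun i => u i (Classical.arbitrary _), col_mem_lattice u _,
          col_ne_zero_of_det hdetne _, hcol1 _⟩ hbdd
    refine ⟨fun j => fun i => u i j, fun j => col_mem_lattice u j, ?_,
      fun j => by rw [hcol1 j, hell]⟩
    rw [Fintype.linearIndependent_iff]
    intro a ha
    have hmv : u.mulVec a = 0 := by
      funext i
      have := congrFun ha i
      simpa [Matrix.mulVec, dotProduct, Finset.sum_apply, mul_comm] using this
    by_contra hax
    push_neg at hax
    obtain ⟨i1, hi1⟩ := hax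
    have hane : a ≠ 0 := by
      intro hz; rw [hz] at hi1; exact hi1 rfl
    have : u.det = 0 := Matrix.exists_mulVec_eq_zero_iff.mp ⟨a, hane, hmv⟩
    exact hdetne this


/-- A unimodular lattice is well rounded if and only if it is of the form
`uR^d` for a matrix `u` with entries in `O` and `|det u| = 1`. -/
theorem wellRounded_iff {d : ℕ} (hd : 2 ≤ d)
    (g : Matrix (Fin d) (Fin d) (Kt Fq)) (hg : Kabs Fq g.det = 1) :
    IsWellRounded Fq (lattice Fq g) ↔
      ∃ u : Matrix (Fin d) (Fin d) (Kt Fq),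
        (∀ i j, Kabs Fq (u i j) ≤ 1) ∧ Kabs Fq u.det = 1 ∧
        lattice Fq g = lattice Fq u := by
  exact wellRounded_iff_aux Fq hd g hg
end
end

section
/- Let n ≥ 1, let θ₁,…,θ_n ∈ K̃ with |θ_i| ≤ q^{-1} for each i (i.e. θ_i ∈ x^{-1}O), and let t₁,…,t_n ≥ 0 be integers. Then there exist polynomials a, b₁,…,b_n ∈ R = 𝔽_q[x] with (b₁,…,b_n) ≠ (0,…,0) such that |b₁θ₁ + … + b_nθ_n − a| ≤ q^{-(t₁+…+t_n+n)} and |b_i| ≤ q^{t_i} for every i = 1,…,n. (Improved Dirichlet theorem over 𝔽_q((x^{-1})).) -/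
noncomputable section

open scoped Classical

variable (Fq : Type) [Field Fq] [Fintype Fq]

section Aux

variable {Fq}

lemma one_lt_qcard : (1 : ℝ) < (Fintype.card Fq : ℝ) := by
  exact_mod_cast Fintype.one_lt_card

lemma Kabs_le_of_coeff_eq_zero {f : Kt Fq} {k : ℤ} (h : ∀ m < k, f.coeff m = 0) :
    Kabs Fq f ≤ (Fintype.card Fq : ℝ) ^ (-k) := by
  unfold Kabs
  split_ifs with hf
  · positivity
  · rw [zpow_le_zpow_iff_right₀ (one_lt_qcard (Fq := Fq)), neg_le_neg_iff]
    by_contra hk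
    exact hf (HahnSeries.coeff_order_eq_zero.mp (h _ (lt_of_not_ge hk)))

lemma coeff_eq_zero_of_Kabs_le {f : Kt Fq} {k : ℤ}
    (h : Kabs Fq f ≤ (Fintype.card Fq : ℝ) ^ (-k)) : ∀ m < k, f.coeff m = 0 := by
  intro m hm
  by_cases hf : f = 0
  · simp [hf]
  · unfold Kabs at h
    rw [if_neg hf, zpow_le_zpow_iff_right₀ (one_lt_qcard (Fq := Fq)), neg_le_neg_iff] at h
    exact HahnSeries.coeff_eq_zero_of_lt_order (lt_of_lt_of_le hm h)

lemma polyK_coeff (b : Polynomial Fq) (m : ℤ) :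
    (polyK Fq b).coeff m = if m ≤ 0 then b.coeff (-m).toNat else 0 := by
  induction b using Polynomial.induction_on' with
  | add p q hp hq =>
    rw [map_add, HahnSeries.coeff_add, hp, hq, Polynomial.coeff_add]
    split_ifs <;> simp
  | monomial k c =>
    have hKx : (Kx Fq) ^ k = HahnSeries.single (-(k : ℤ)) (1 : Fq) := by
      rw [Kx, HahnSeries.single_pow, one_pow, nsmul_eq_mul, mul_neg_one]
    have : polyK Fq (Polynomial.monomial k c) = HahnSeries.single (-(k : ℤ)) c := by
      show Polynomial.aeval (Kx Fq) (Polynomial.monomial k c) = _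
      rw [Polynomial.aeval_monomial, hKx]
      have halg : (algebraMap Fq (Kt Fq)) c = HahnSeries.single (0 : ℤ) c := by
        have h : algebraMap Fq (Kt Fq)
            = (HahnSeries.ofPowerSeries ℤ Fq).comp (algebraMap Fq (PowerSeries Fq)) := rfl
        rw [h, RingHom.comp_apply, PowerSeries.algebraMap_apply, Algebra.algebraMap_self_apply,
          HahnSeries.ofPowerSeries_C, HahnSeries.C_apply]
      rw [halg, HahnSeries.single_mul_single, zero_add, mul_one]
    rw [this, HahnSeries.coeff_single, Polynomial.coeff_monomial]
    split_ifs <;> first | rfl | (exfalso; omega)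

lemma polyK_coeff_eq_zero_of_natDegree_le {b : Polynomial Fq} {s : ℕ} (hb : b.natDegree ≤ s)
    {m : ℤ} (hm : m < -(s : ℤ)) : (polyK Fq b).coeff m = 0 := by
  rw [polyK_coeff, if_pos (by omega)]
  exact Polynomial.coeff_eq_zero_of_natDegree_lt (by omega)

lemma mul_coeff_eq_zero {f g : Kt Fq} {r s m : ℤ} (hf : ∀ u < r, f.coeff u = 0)
    (hg : ∀ u < s, g.coeff u = 0) (hm : m < r + s) : (f * g).coeff m = 0 := by
  by_contra h
  obtain ⟨u, hu, v, hv, rfl⟩ := HahnSeries.support_mul_subset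
    ((HahnSeries.mem_support _ _).2 h)
  rw [HahnSeries.mem_support] at hu hv
  have h1 : r ≤ u := by by_contra h'; exact hu (hf _ (lt_of_not_ge h'))
  have h2 : s ≤ v := by by_contra h'; exact hv (hg _ (lt_of_not_ge h'))
  exact absurd hm (not_lt.2 (add_le_add h1 h2))

lemma natDegree_le_of_mem_degreeLT {s : ℕ} {b : Polynomial Fq}
    (hb : b ∈ Polynomial.degreeLT Fq (s + 1)) : b.natDegree ≤ s := by
  rw [Polynomial.mem_degreeLT] at hb
  by_cases h0 : b = 0
  · simp [h0]
  · rw [Polynomial.degree_eq_natDegree h0] at hb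
    exact_mod_cast Nat.lt_succ_iff.mp (by exact_mod_cast hb)

lemma hahn_sum_coeff {α : Type*} (s : Finset α) (g : α → Kt Fq) (m : ℤ) :
    (∑ i ∈ s, g i).coeff m = ∑ i ∈ s, (g i).coeff m :=
  map_sum (HahnSeries.coeff.addMonoidHom m) g s

lemma polyK_C (c : Fq) : polyK Fq (Polynomial.C c) = HahnSeries.single (0 : ℤ) c := by
  show Polynomial.aeval (Kx Fq) (Polynomial.C c) = _
  rw [Polynomial.aeval_C]
  have h : algebraMap Fq (Kt Fq)
      = (HahnSeries.ofPowerSeries ℤ Fq).comp (algebraMap Fq (PowerSeries Fq)) := rfl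
  rw [h, RingHom.comp_apply, PowerSeries.algebraMap_apply, Algebra.algebraMap_self_apply,
    HahnSeries.ofPowerSeries_C, HahnSeries.C_apply]

end Aux

/-- improved Dirichlet theorem over `𝔽_q((x⁻¹))`.
Given `θ₁,…,θ_n ∈ x⁻¹O` and integers `t₁,…,t_n ≥ 0`, there exist polynomials
`a, b₁,…,b_n ∈ 𝔽_q[x]`, with the `b_i` not all zero, such that
`|b₁θ₁+…+b_nθ_n − a| ≤ q^{-(t₁+…+t_n+n)}` and `|b_i| ≤ q^{t_i}` for every `i`. -/
theorem improved_dirichlet (n : ℕ) (hn : 1 ≤ n)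
    (θ : Fin n → Kt Fq) (hθ : ∀ i, Kabs Fq (θ i) ≤ (Fintype.card Fq : ℝ)⁻¹)
    (t : Fin n → ℕ) :
    ∃ (a : Polynomial Fq) (b : Fin n → Polynomial Fq), b ≠ 0 ∧
      Kabs Fq (∑ i, polyK Fq (b i) * θ i - polyK Fq a)
        ≤ (Fintype.card Fq : ℝ) ^ (-((∑ i, t i : ℕ) + (n : ℤ))) ∧
      ∀ i, Kabs Fq (polyK Fq (b i)) ≤ (Fintype.card Fq : ℝ) ^ (t i : ℤ) := by
  classical
  set T : ℕ := ∑ i, t i with hT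
  have hθ' : ∀ i, ∀ m < (1 : ℤ), (θ i).coeff m = 0 := by
    intro i
    apply coeff_eq_zero_of_Kabs_le
    simpa [zpow_neg_one] using hθ i
  -- the linear map sending `b` to the coefficients of `x⁻¹,…,x⁻(T+n-1)` of `∑ bᵢθᵢ`
  let L : (∀ i : Fin n, Polynomial.degreeLT Fq (t i + 1)) →ₗ[Fq] (Fin (T + n - 1) → Fq) :=
    { toFun := fun b j => (∑ i, polyK Fq (b i : Polynomial Fq) * θ i).coeff (((j : ℕ) : ℤ) + 1)
      map_add' := by
        intro x y
        funext j
        simp only [Pi.add_apply, Submodule.coe_add, map_add, add_mul,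
          Finset.sum_add_distrib, HahnSeries.coeff_add]
      map_smul' := by
        intro c x
        funext j
        simp only [RingHom.id_apply, Pi.smul_apply, smul_eq_mul]
        have hsum : (∑ i, polyK Fq ((c • x i : Polynomial.degreeLT Fq (t i + 1)) : Polynomial Fq)
              * θ i)
            = HahnSeries.single (0 : ℤ) c * ∑ i, polyK Fq ((x i : Polynomial Fq)) * θ i := by
          rw [Finset.mul_sum]
          refine Finset.sum_congr rfl fun i _ => ?_
          have hco : ((c • x i : Polynomial.degreeLT Fq (t i + 1)) : Polynomial Fq)
              = c • ((x i : Polynomial Fq)) := rfl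
          rw [hco, Polynomial.smul_eq_C_mul, map_mul, polyK_C, mul_assoc]
        show (∑ i, polyK Fq ((c • x i : Polynomial.degreeLT Fq (t i + 1)) : Polynomial Fq)
            * θ i).coeff _ = _
        rw [hsum, HahnSeries.coeff_single_zero_mul] }
  haveI : ∀ i : Fin n, Module.Finite Fq (Polynomial.degreeLT Fq (t i + 1)) := fun i =>
    Module.Finite.equiv (Polynomial.degreeLTEquiv Fq (t i + 1)).symm
  have hrank : ¬ Function.Injective L := by
    intro hinj
    have h1 := LinearMap.finrank_le_finrank_of_injective hinj
    have h2 : Module.finrank Fq (∀ i, Polynomial.degreeLT Fq (t i + 1)) = T + n := by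
      rw [Module.finrank_pi_fintype]
      have he : ∀ i : Fin n,
          Module.finrank Fq (Polynomial.degreeLT Fq (t i + 1)) = t i + 1 := fun i => by
        rw [LinearEquiv.finrank_eq (Polynomial.degreeLTEquiv Fq (t i + 1)),
          Module.finrank_pi, Fintype.card_fin]
      simp only [he, Finset.sum_add_distrib, Finset.sum_const, Finset.card_univ,
        Fintype.card_fin, smul_eq_mul, mul_one, hT]
    have h3 : Module.finrank Fq (Fin (T + n - 1) → Fq) = T + n - 1 := by
      rw [Module.finrank_pi, Fintype.card_fin]
    rw [h2, h3] at h1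
    omega
  obtain ⟨x, hxk, hx0⟩ : ∃ x, x ∈ LinearMap.ker L ∧ x ≠ 0 := by
    rw [← LinearMap.ker_eq_bot] at hrank
    exact (Submodule.ne_bot_iff _).1 hrank
  rw [LinearMap.mem_ker] at hxk
  set b : Fin n → Polynomial Fq := fun i => (x i : Polynomial Fq) with hb
  set f : Kt Fq := ∑ i, polyK Fq (b i) * θ i with hf
  have hbne : b ≠ 0 := by
    intro h
    apply hx0
    funext i
    exact Subtype.ext (congrFun h i)
  have hdeg : ∀ i, (b i).natDegree ≤ t i := fun i => natDegree_le_of_mem_degreeLT (x i).2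
  have hker : ∀ m : ℤ, 1 ≤ m → m < (T : ℤ) + n → f.coeff m = 0 := by
    intro m h1 h2
    have hlt : (m - 1).toNat < T + n - 1 := by omega
    have h5 : f.coeff ((((m - 1).toNat : ℕ) : ℤ) + 1) = 0 := congrFun hxk ⟨(m - 1).toNat, hlt⟩
    have hval : (((m - 1).toNat : ℕ) : ℤ) + 1 = m := by omega
    rwa [hval] at h5
  have hsummand : ∀ i, ∀ m : ℤ, m < 1 - (t i : ℤ) → (polyK Fq (b i) * θ i).coeff m = 0 := by
    intro i m hm
    exact mul_coeff_eq_zero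
      (fun u hu => polyK_coeff_eq_zero_of_natDegree_le (hdeg i) hu) (hθ' i) (by omega)
  have hlow : ∀ m : ℤ, m ≤ -(T : ℤ) → f.coeff m = 0 := by
    intro m hm
    rw [hf, hahn_sum_coeff]
    apply Finset.sum_eq_zero
    intro i _
    apply hsummand
    have hti : (t i : ℤ) ≤ (T : ℤ) := by
      exact_mod_cast Finset.single_le_sum (f := fun i => t i)
        (fun _ _ => Nat.zero_le _) (Finset.mem_univ i)
    omega
  set a : Polynomial Fq :=
    ∑ k ∈ Finset.range (T + 1), Polynomial.C (f.coeff (-(k : ℤ))) * Polynomial.X ^ k with ha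
  have hacoeff : ∀ j : ℕ, a.coeff j = if j ≤ T then f.coeff (-(j : ℤ)) else 0 := by
    intro j
    rw [ha, Polynomial.finset_sum_coeff]
    have hco : ∀ k ∈ Finset.range (T + 1),
        (Polynomial.C (f.coeff (-(k : ℤ))) * Polynomial.X ^ k).coeff j
          = if j = k then f.coeff (-(k : ℤ)) else 0 := by
      intro k _
      rw [Polynomial.coeff_C_mul, Polynomial.coeff_X_pow]
      by_cases h : j = k <;> simp [h]
    rw [Finset.sum_congr rfl hco, Finset.sum_ite_eq (Finset.range (T + 1)) j
      (fun k => f.coeff (-(k : ℤ)))]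
    simp [Finset.mem_range, Nat.lt_succ_iff]
  have hg : ∀ m : ℤ, m < (T : ℤ) + n → (f - polyK Fq a).coeff m = 0 := by
    intro m hm
    rw [HahnSeries.coeff_sub, polyK_coeff]
    by_cases h0 : m ≤ 0
    · rw [if_pos h0, hacoeff]
      by_cases h1 : (-m).toNat ≤ T
      · rw [if_pos h1]
        have hmm : (-(((-m).toNat : ℕ) : ℤ)) = m := by omega
        rw [hmm, sub_self]
      · rw [if_neg h1, hlow m (by omega), sub_zero]
    · rw [if_neg h0, sub_zero]
      exact hker m (by omega) hm
  refine ⟨a, b, hbne, ?_, ?_⟩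
  · exact Kabs_le_of_coeff_eq_zero (f := f - polyK Fq a) (k := (T : ℤ) + n) hg
  · intro i
    have hle : Kabs Fq (polyK Fq (b i)) ≤ (Fintype.card Fq : ℝ) ^ (-(-(t i : ℤ))) :=
      Kabs_le_of_coeff_eq_zero
        (fun m hm => polyK_coeff_eq_zero_of_natDegree_le (hdeg i) (by omega))
    simpa using hle
end
end
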